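/- arXiv:2301.08608 — 2 statements merged into one kernel-verified Lean document; each statement's English description precedes it below -/
import Mathlib

section
/- Let B be a generalized Bayesian network with cutset C. If every bottom SCC of the cutset Markov chain M_{B↑C} is aperiodic, then the limit semantics Lim(B, C, γ0) is defined for every initial distribution γ0 over assignments of C (i.e., the sequence γ_n with γ_{n+1} = Next(B,C,γ_n)|_C converges for every γ0). -/
open Filter
open scoped Classical
set_option maxHeartbeats 1600000
set_option linter.unusedSectionVars false

noncomputable section

namespace GBNPaper

variable {V : Type} [Fintype V] [DecidableEq V]

/-- A distribution over a finite type: nonnegative values summing to one. -/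
def IsDist {α : Type} [Fintype α] (μ : α → ℝ) : Prop :=
  (∀ a, 0 ≤ μ a) ∧ ∑ a, μ a = 1

/-- The set of parents of a node `X` w.r.t. an edge set `E`. -/
def Pre (E : Finset (V × V)) (X : V) : Finset V :=
  (E.filter fun e => e.2 = X).image Prod.fst

/-- The set of initial (parentless) nodes. -/
def InitSet (E : Finset (V × V)) : Finset V :=
  Finset.univ.filter fun X => Pre E X = ∅

/-- Assignments over a subset `U` of the nodes. -/
abbrev Asg (U : Finset V) : Type := {x // x ∈ U} → Bool

/-- A full assignment `b` agrees with a partial assignment `d` on `U`. -/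
abbrev Agrees (b : V → Bool) (U : Finset V) (d : Asg U) : Prop :=
  ∀ x : {x // x ∈ U}, b x.1 = d x

/-- A generalized Bayesian network over node set `V`. -/
structure GBN (V : Type) [Fintype V] [DecidableEq V] where
  /-- the directed edges -/
  edges : Finset (V × V)
  /-- CPT entries: the probability of `X = T` given an assignment of the parents of `X` -/
  cpt : (X : V) → Asg (Pre edges X) → ℝ
  cpt_nonneg : ∀ X b, 0 ≤ cpt X b
  cpt_le_one : ∀ X b, cpt X b ≤ 1
  /-- the initial distribution over assignments of the initial nodes -/
  ι : Asg (InitSet edges) → ℝ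
  ι_dist : IsDist ι

/-- Probability of an event (set of full assignments) under `μ`. -/
def probIf (μ : (V → Bool) → ℝ) (p : (V → Bool) → Prop) : ℝ :=
  ∑ b : V → Bool, if p b then μ b else 0

/-- The marginal distribution of `μ` on `U`. -/
def marginal (μ : (V → Bool) → ℝ) (U : Finset V) : Asg U → ℝ :=
  fun d => probIf μ fun b => Agrees b U d

/-- `Pr(X = v | parents as given by b)`. -/
def copyProb (B : GBN V) (X : V) (v : Bool) (b : V → Bool) : ℝ :=
  if v then B.cpt X (fun p => b p.1) else 1 - B.cpt X (fun p => b p.1)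

/-- The standard BN semantics (chain rule) of a GBN. -/
def distBN (B : GBN V) (b : V → Bool) : ℝ :=
  B.ι (fun x => b x.1) *
    ∏ X ∈ Finset.univ \ InitSet B.edges, copyProb B X (b X) b

/-- The edge set contains no directed cycle. -/
def Acyclic (E : Finset (V × V)) : Prop :=
  ∀ x : V, ¬ Relation.TransGen (fun a b => (a, b) ∈ E) x x

/-- `C` is a cutset: every directed cycle contains a node of `C`. -/
def IsCutset (E : Finset (V × V)) (C : Finset V) : Prop :=
  ∀ x : V, ¬ Relation.TransGen (fun a b => (a, b) ∈ E ∧ a ∉ C ∧ b ∉ C) x x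

/-- The standard BN semantics of the `C`-dissected GBN `B↑C↑γ`, as a joint
distribution over assignments of the original nodes `V` together with
assignments of the copies `C'` of the cutset nodes. -/
def distDissect (B : GBN V) (C : Finset V) (γ : Asg C → ℝ)
    (b : V → Bool) (c : Asg C) : ℝ :=
  B.ι (fun x => b x.1) * γ (fun x => b x.1) *
    (∏ X ∈ (Finset.univ \ InitSet B.edges) \ C, copyProb B X (b X) b) *
    ∏ Y ∈ C.attach, copyProb B Y.1 (c Y) b

/-- `Next(B,C,γ)`: restrict `dist_BN(B↑C↑γ)` to `(V∖C) ∪ C'` and re-identify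
the copies with the original cutset nodes. -/
def Next (B : GBN V) (C : Finset V) (γ : Asg C → ℝ) (a : V → Bool) : ℝ :=
  ∑ b : V → Bool,
    if ∀ x : V, x ∉ C → b x = a x then distDissect B C γ b (fun y => a y.1) else 0

/-- `Extend(B,C,γ) = dist_BN(B↑C↑γ)|_V`. -/
def Extend (B : GBN V) (C : Finset V) (γ : Asg C → ℝ) (a : V → Bool) : ℝ :=
  ∑ c : Asg C, distDissect B C γ a c

/-- Dirac (point) distribution. -/
def DiracD {α : Type} [DecidableEq α] (b : α) : α → ℝ := fun c => if c = b then 1 else 0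

/-- Transition matrix of the cutset Markov chain `M_{B↑C}`:
`P(b,c) = Next(B,C,Dirac(b))|_C (c)`. -/
def cutsetP (B : GBN V) (C : Finset V) (b c : Asg C) : ℝ :=
  marginal (Next B C (DiracD b)) C c

/-- Vector-matrix multiplication `γ·P`. -/
def vecMul {α : Type} [Fintype α] (γ : α → ℝ) (P : α → α → ℝ) : α → ℝ :=
  fun c => ∑ b, γ b * P b c

/-- The transient distributions `γ0·P^n`. -/
def matIter {α : Type} [Fintype α] (P : α → α → ℝ) (γ0 : α → ℝ) : ℕ → (α → ℝ)
  | 0 => γ0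
  | n + 1 => vecMul (matIter P γ0 n) P

/-- The sequence `γ_{n+1} = Next(B,C,γ_n)|_C`. -/
def nextSeq (B : GBN V) (C : Finset V) (γ0 : Asg C → ℝ) : ℕ → (Asg C → ℝ)
  | 0 => γ0
  | n + 1 => marginal (Next B C (nextSeq B C γ0 n)) C

/-- Cesàro averages of a sequence of vectors. -/
def cesaro {α : Type} (f : ℕ → α → ℝ) (n : ℕ) : α → ℝ :=
  fun a => (∑ i ∈ Finset.range (n + 1), f i a) / (n + 1)

/-- The Markov chain semantics `[B]_{MC-C}`: image of
`γ0 ↦ Extend(B,C,lrf^{γ0})` over all initial cutset distributions `γ0`,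
where `lrf^{γ0}` is the Cesàro limit of the transient distributions. -/
def MCSem (B : GBN V) (C : Finset V) : Set ((V → Bool) → ℝ) :=
  { μ | ∃ γ0 γ, IsDist γ0 ∧
      Tendsto (cesaro (matIter (cutsetP B C) γ0)) atTop (nhds γ) ∧
      μ = Extend B C γ }

/-- The limit semantics `[B]_{Lim-C}`. -/
def LimSem (B : GBN V) (C : Finset V) : Set ((V → Bool) → ℝ) :=
  { μ | ∃ γ0 γ, IsDist γ0 ∧
      Tendsto (nextSeq B C γ0) atTop (nhds γ) ∧
      μ = Extend B C γ }

/-- The limit average semantics `[B]_{LimAvg-C}`. -/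
def LimAvgSem (B : GBN V) (C : Finset V) : Set ((V → Bool) → ℝ) :=
  { μ | ∃ γ0 γ, IsDist γ0 ∧
      Tendsto (cesaro (nextSeq B C γ0)) atTop (nhds γ) ∧
      μ = Extend B C γ }

/-- The Markov chain semantics in stationary-distribution form:
`{ Extend(B,C,γ) : γ a distribution with γ = γ·P }`. -/
def MCStatSem (B : GBN V) (C : Finset V) : Set ((V → Bool) → ℝ) :=
  { μ | ∃ γ : Asg C → ℝ, IsDist γ ∧ γ = vecMul γ (cutsetP B C) ∧ μ = Extend B C γ }

/-- Strong CPT-consistency of `μ` for node `X`. -/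
def StrongCPT (B : GBN V) (μ : (V → Bool) → ℝ) (X : V) : Prop :=
  ∀ c : Asg (Pre B.edges X),
    probIf μ (fun f => f X = true ∧ Agrees f (Pre B.edges X) c) =
      probIf μ (fun f => Agrees f (Pre B.edges X) c) * B.cpt X c

/-- Weak CPT-consistency of `μ` for node `X`. -/
def WeakCPT (B : GBN V) (μ : (V → Bool) → ℝ) (X : V) : Prop :=
  probIf μ (fun f => f X = true) =
    ∑ c : Asg (Pre B.edges X),
      probIf μ (fun f => Agrees f (Pre B.edges X) c) * B.cpt X c

/-- The CPT semantics `[B]_{Cpt}`. -/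
def CptSem (B : GBN V) : Set ((V → Bool) → ℝ) :=
  { μ | IsDist μ ∧ marginal μ (InitSet B.edges) = B.ι ∧
      ∀ X, X ∉ InitSet B.edges → StrongCPT B μ X }

/-- `(X ⊥ Y | Z) ∈ Indep(μ)`. -/
def IndepTriple (μ : (V → Bool) → ℝ) (X Y Z : Finset V) : Prop :=
  ∀ (a : Asg X) (b : Asg Y) (c : Asg Z),
    probIf μ (fun f => Agrees f Y b ∧ Agrees f Z c) = 0 ∨
    probIf μ (fun f => Agrees f X a ∧ Agrees f Y b ∧ Agrees f Z c) /
        probIf μ (fun f => Agrees f Y b ∧ Agrees f Z c) =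
      probIf μ (fun f => Agrees f X a ∧ Agrees f Z c) /
        probIf μ (fun f => Agrees f Z c)

def PairwiseDisjoint3 (X Y Z : Finset V) : Prop :=
  Disjoint X Y ∧ Disjoint X Z ∧ Disjoint Y Z

/-- `Indep(μ)` as a set of triples. -/
def IndepSet (μ : (V → Bool) → ℝ) : Set (Finset V × Finset V × Finset V) :=
  { t | PairwiseDisjoint3 t.1 t.2.1 t.2.2 ∧ IndepTriple μ t.1 t.2.1 t.2.2 }

/-- The CPT-I semantics `[B]_{Cpt-I}`. -/
def CptISem (B : GBN V) (I : Set (Finset V × Finset V × Finset V)) :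
    Set ((V → Bool) → ℝ) :=
  { μ | μ ∈ CptSem B ∧ I ⊆ IndepSet μ }

/-! d-separation -/

def Adjacent (E : Finset (V × V)) (x y : V) : Prop := (x, y) ∈ E ∨ (y, x) ∈ E

/-- Reachability along directed edges (including the node itself). -/
def Reaches (E : Finset (V × V)) (x y : V) : Prop :=
  Relation.ReflTransGen (fun a b => (a, b) ∈ E) x y

/-- An intermediate triple `a, w, b` on a path blocks it given `Z`:
either `w ∈ Z` and `w` lies in a chain or a fork, or `w` lies in a collider
and no node reachable from `w` (including `w`) is in `Z`. -/
def BlockedTriple (E : Finset (V × V)) (Z : Finset V) (a w b : V) : Prop :=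
  (w ∈ Z ∧ (((a, w) ∈ E ∧ (w, b) ∈ E) ∨ ((b, w) ∈ E ∧ (w, a) ∈ E) ∨
      ((w, a) ∈ E ∧ (w, b) ∈ E))) ∨
  ((a, w) ∈ E ∧ (b, w) ∈ E ∧ ∀ d, Reaches E w d → d ∉ Z)

/-- A path (as a list of nodes) is blocked given `Z`. -/
def Blocked (E : Finset (V × V)) (Z : Finset V) (W : List V) : Prop :=
  ∃ l₁ a w b l₂, W = l₁ ++ a :: w :: b :: l₂ ∧ BlockedTriple E Z a w b

/-- `x` and `y` are d-separated given `Z`: every undirected simple path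
from `x` to `y` is blocked given `Z`. -/
def DSepNodes (E : Finset (V × V)) (x y : V) (Z : Finset V) : Prop :=
  ∀ W : List V, W.Chain' (Adjacent E) → W.Nodup →
    W.head? = some x → W.getLast? = some y → Blocked E Z W

def DSep (E : Finset (V × V)) (X Y Z : Finset V) : Prop :=
  ∀ x ∈ X, ∀ y ∈ Y, DSepNodes E x y Z

/-- `d-sep(G)` as a set of triples of pairwise disjoint node sets. -/
def DSepSet (E : Finset (V × V)) : Set (Finset V × Finset V × Finset V) :=
  { t | PairwiseDisjoint3 t.1 t.2.1 t.2.2 ∧ DSep E t.1 t.2.1 t.2.2 }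

/-- `Close(G)`: add an edge between every ordered pair of distinct initial nodes. -/
def Close (E : Finset (V × V)) : Finset (V × V) :=
  E ∪ ((InitSet E ×ˢ InitSet E).filter fun p => p.1 ≠ p.2)

/-- `G[C]`: remove all edges into nodes of `C` (so the nodes of `C` are initial). -/
def CutGraph (E : Finset (V × V)) (C : Finset V) : Finset (V × V) :=
  E.filter fun e => e.2 ∉ C

/-- `ι` is a product distribution: it factorizes into its single-node marginals,
i.e. the initial nodes are mutually independent under `ι`. -/
def IsProductDist {U : Finset V} (ι : Asg U → ℝ) : Prop :=
  ∀ b : Asg U,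
    ι b = ∏ x : {x // x ∈ U}, ∑ b' : Asg U, if b' x = b x then ι b' else 0

/-! Markov chain notions -/

/-- Reachability in the underlying graph of a DTMC. -/
def MCReach {α : Type} (P : α → α → ℝ) (x y : α) : Prop :=
  Relation.ReflTransGen (fun a b => 0 < P a b) x y

/-- Bottom strongly connected component of a DTMC: nonempty, closed under
reachability, and strongly connected. -/
def IsBSCC {α : Type} (P : α → α → ℝ) (D : Set α) : Prop :=
  D.Nonempty ∧ (∀ x ∈ D, ∀ y, MCReach P x y → y ∈ D) ∧
    ∀ x ∈ D, ∀ y ∈ D, MCReach P x y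

/-- Walks of a given length along positive-probability transitions. -/
def walkLen {α : Type} (P : α → α → ℝ) : ℕ → α → α → Prop
  | 0, x, y => x = y
  | n + 1, x, y => ∃ z, 0 < P x z ∧ walkLen P n z y

/-- The lengths of the cycles of `D`. -/
def CycleLens {α : Type} (P : α → α → ℝ) (D : Set α) : Set ℕ :=
  { n | 0 < n ∧ ∃ x ∈ D, walkLen P n x x }

/-- `D` is aperiodic: the gcd of the lengths of its cycles equals 1. -/
def AperiodicBSCC {α : Type} (P : α → α → ℝ) (D : Set α) : Prop :=
  ∀ d : ℕ, (∀ n ∈ CycleLens P D, d ∣ n) → d = 1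

/-- `D` is periodic: the gcd of the lengths of its cycles is greater than 1. -/
def PeriodicBSCC {α : Type} (P : α → α → ℝ) (D : Set α) : Prop :=
  ∃ d : ℕ, 1 < d ∧ ∀ n ∈ CycleLens P D, d ∣ n

/-- A GBN is smooth if all CPT entries and all values of `ι` lie in `(0,1)`. -/
def Smooth (B : GBN V) : Prop :=
  (∀ X b, B.cpt X b ∈ Set.Ioo (0 : ℝ) 1) ∧ ∀ d, B.ι d ∈ Set.Ioo (0 : ℝ) 1





lemma mul_mem_S' (S : Set ℕ) (hadd : ∀ a ∈ S, ∀ b ∈ S, a + b ∈ S) :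
    ∀ (m a : ℕ), a ∈ insert 0 S → m * a ∈ insert 0 S := by
  intro m
  induction m with
  | zero => intro a _; simp
  | succ k ih =>
    intro a ha
    have hk := ih a ha
    rcases ha with h0 | hS
    · simp [h0]
    rcases hk with h0 | hk
    · have : (k+1) * a = a := by
        have : k * a = 0 := h0
        ring_nf
        omega
      rw [this]; exact Or.inr hS
    · have : (k+1) * a = k * a + a := by ring
      rw [this]; exact Or.inr (hadd _ hk _ hS)

lemma semigroup_cofinite (S : Set ℕ) (hadd : ∀ a ∈ S, ∀ b ∈ S, a + b ∈ S)
    (hgcd : ∀ d : ℕ, (∀ n ∈ S, d ∣ n) → d = 1) :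
    ∃ N, ∀ n ≥ N, n ∈ S := by
  classical
  set S' : Set ℕ := insert 0 S with hS'
  have hadd' : ∀ a ∈ S', ∀ b ∈ S', a + b ∈ S' := by
    rintro a (rfl | ha) b hb
    · simpa using hb
    · rcases hb with rfl | hb
      · simp only [add_zero]; exact Or.inr ha
      · exact Or.inr (hadd _ ha _ hb)
  have h0S' : (0:ℕ) ∈ S' := Or.inl rfl
  -- subgroup of differences
  let H : AddSubgroup ℤ :=
  { carrier := {z | ∃ a ∈ S', ∃ b ∈ S', z = (a:ℤ) - b}
    zero_mem' := ⟨0, h0S', 0, h0S', by simp⟩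
    add_mem' := by
      rintro x y ⟨a, ha, b, hb, rfl⟩ ⟨c, hc, d, hd, rfl⟩
      exact ⟨a + c, hadd' _ ha _ hc, b + d, hadd' _ hb _ hd, by push_cast; ring⟩
    neg_mem' := by
      rintro x ⟨a, ha, b, hb, rfl⟩
      exact ⟨b, hb, a, ha, by ring⟩ }
  obtain ⟨g, hg⟩ := Int.subgroup_cyclic H
  have hmemS : ∀ s ∈ S, (s:ℤ) ∈ H := fun s hs => ⟨s, Or.inr hs, 0, h0S', by simp⟩
  have hdvd : ∀ s ∈ S, g ∣ (s:ℤ) := by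
    intro s hs
    have := hmemS s hs
    rw [hg, AddSubgroup.mem_closure_singleton] at this
    obtain ⟨n, hn⟩ := this
    exact ⟨n, by rw [← hn]; simp [zsmul_eq_mul, mul_comm]⟩
  have hga : g.natAbs = 1 := by
    apply hgcd
    intro n hn
    have := hdvd n hn
    exact Int.ofNat_dvd.mp (by simpa [Int.natAbs_dvd] using this)
  have h1H : (1:ℤ) ∈ H := by
    rw [hg]
    rcases Int.natAbs_eq g with h | h
    · have : g = 1 := by omega
      rw [this]; exact AddSubgroup.mem_closure_singleton.mpr ⟨1, by simp⟩
    · have : g = -1 := by omega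
      rw [this]; exact AddSubgroup.mem_closure_singleton.mpr ⟨-1, by simp⟩
  obtain ⟨A, hA, B, hB, hAB⟩ := h1H
  have hAB' : A = B + 1 := by
    have : (A:ℤ) = (B:ℤ) + 1 := by linarith [hAB]
    exact_mod_cast this
  -- B = 0 case: 1 ∈ S
  rcases Nat.eq_zero_or_pos B with hB0 | hBpos
  · subst hB0
    have h1S : (1:ℕ) ∈ S := by
      rcases hA with h | h
      · omega
      · simpa [hAB'] using h
    refine ⟨1, fun n hn => ?_⟩
    clear hAB hA hB
    induction n with
    | zero => omega
    | succ k ih =>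
      rcases Nat.eq_zero_or_pos k with rfl | hk
      · simpa using h1S
      · exact hadd _ (ih hk) _ h1S
  · refine ⟨B * B + 1, fun n hn => ?_⟩
    set k := n / B with hk
    set r := n % B with hr
    have hn' : n = B * k + r := (Nat.div_add_mod n B).symm
    have hrB : r < B := Nat.mod_lt _ hBpos
    have hkB : r ≤ k := by
      have h1 : B * B < B * (k + 1) := by
        have heq : B * (k + 1) = B * k + B := by ring
        rw [heq]; omega
      have h2 : B < k + 1 := Nat.lt_of_mul_lt_mul_left h1
      omega
    have hmul : r * B ≤ k * B := Nat.mul_le_mul_right _ hkB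
    have hrep : n = (k - r) * B + r * A := by
      rw [hAB']
      have e1 : r * (B + 1) = r * B + r := by ring
      have e2 : (k - r) * B = k * B - r * B := Nat.sub_mul _ _ _
      have e3 : B * k = k * B := Nat.mul_comm _ _
      omega
    have hmem : n ∈ S' := by
      rw [hrep]
      exact hadd' _ (mul_mem_S' S hadd (k - r) B hB) _ (mul_mem_S' S hadd r A hA)
    rcases hmem with h0 | h
    · omega
    · exact h




section MC
variable {α : Type} [Fintype α] [DecidableEq α]

/-- entries of the `n`-th matrix power of `P`. -/
def mpow (P : α → α → ℝ) : ℕ → α → α → ℝ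
  | 0 => fun x y => if x = y then 1 else 0
  | n+1 => fun x y => ∑ z, mpow P n x z * P z y

variable {P : α → α → ℝ}

lemma mpow_zero (x y : α) : mpow P 0 x y = if x = y then 1 else 0 := rfl

lemma mpow_succ (n : ℕ) (x y : α) :
    mpow P (n+1) x y = ∑ z, mpow P n x z * P z y := rfl

lemma mpow_nonneg (hnn : ∀ x y, 0 ≤ P x y) (n : ℕ) (x y : α) :
    0 ≤ mpow P n x y := by
  induction n generalizing x y with
  | zero => rw [mpow_zero]; split <;> norm_num
  | succ n ih =>
      exact Finset.sum_nonneg fun z _ => mul_nonneg (ih x z) (hnn z y)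

lemma mpow_one (x y : α) : mpow P 1 x y = P x y := by
  rw [mpow_succ]
  simp [mpow_zero, ite_mul]

lemma mpow_add (m n : ℕ) (x y : α) :
    mpow P (m + n) x y = ∑ z, mpow P m x z * mpow P n z y := by
  induction n generalizing y with
  | zero => simp [mpow_zero, mul_ite]
  | succ n ih =>
    have : m + (n + 1) = (m + n) + 1 := by ring
    rw [this, mpow_succ]
    have h1 : ∀ z, mpow P (m+n) x z = ∑ w, mpow P m x w * mpow P n w z := fun z => ih z
    calc ∑ z, mpow P (m+n) x z * P z y
        = ∑ z, ∑ w, (mpow P m x w * mpow P n w z) * P z y := by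
          refine Finset.sum_congr rfl fun z _ => ?_
          rw [h1 z, Finset.sum_mul]
      _ = ∑ w, ∑ z, (mpow P m x w * mpow P n w z) * P z y := Finset.sum_comm
      _ = ∑ w, mpow P m x w * mpow P (n+1) w y := by
          refine Finset.sum_congr rfl fun w _ => ?_
          rw [mpow_succ, Finset.mul_sum]
          refine Finset.sum_congr rfl fun z _ => by ring

lemma mpow_succ_left (n : ℕ) (x y : α) :
    mpow P (n+1) x y = ∑ z, P x z * mpow P n z y := by
  have : n + 1 = 1 + n := by ring
  rw [this, mpow_add]
  simp [mpow_one]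

lemma mpow_row (hnn : ∀ x y, 0 ≤ P x y) (hrow : ∀ x, ∑ y, P x y ≤ 1)
    (n : ℕ) (x : α) : ∑ y, mpow P n x y ≤ 1 := by
  induction n generalizing x with
  | zero => simp [mpow_zero]
  | succ n ih =>
    calc ∑ y, mpow P (n+1) x y = ∑ y, ∑ z, mpow P n x z * P z y := rfl
      _ = ∑ z, mpow P n x z * ∑ y, P z y := by
          rw [Finset.sum_comm]
          exact Finset.sum_congr rfl fun z _ => (Finset.mul_sum _ _ _).symm
      _ ≤ ∑ z, mpow P n x z * 1 := by
          refine Finset.sum_le_sum fun z _ => ?_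
          exact mul_le_mul_of_nonneg_left (hrow z) (mpow_nonneg hnn n x z)
      _ = ∑ z, mpow P n x z := by simp
      _ ≤ 1 := ih x

lemma mpow_le_one (hnn : ∀ x y, 0 ≤ P x y) (hrow : ∀ x, ∑ y, P x y ≤ 1)
    (n : ℕ) (x y : α) : mpow P n x y ≤ 1 :=
  le_trans (Finset.single_le_sum (fun z _ => mpow_nonneg hnn n x z) (Finset.mem_univ y))
    (mpow_row hnn hrow n x)

lemma mpow_pos_iff (hnn : ∀ x y, 0 ≤ P x y) (n : ℕ) (x y : α) :
    0 < mpow P n x y ↔ walkLen P n x y := by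
  induction n generalizing x y with
  | zero =>
    rw [mpow_zero]
    constructor
    · intro h; by_contra hne; simp [walkLen] at hne; simp [hne] at h
    · intro h; simp [walkLen] at h; simp [h]
  | succ n ih =>
    rw [mpow_succ_left]
    constructor
    · intro h
      have : ∃ z ∈ Finset.univ, 0 < P x z * mpow P n z y := by
        by_contra hne
        push_neg at hne
        have : ∑ z, P x z * mpow P n z y ≤ 0 :=
          Finset.sum_nonpos fun z hz => hne z hz
        linarith
      obtain ⟨z, _, hz⟩ := this
      have h1 : 0 < P x z := by
        rcases lt_or_eq_of_le (hnn x z) with h' | h'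
        · exact h'
        · rw [← h'] at hz; simp at hz
      have h2 : 0 < mpow P n z y := by
        rcases lt_or_eq_of_le (mpow_nonneg hnn n z y) with h' | h'
        · exact h'
        · rw [← h'] at hz; simp at hz
      exact ⟨z, h1, (ih z y).mp h2⟩
    · rintro ⟨z, hz, hw⟩
      refine Finset.sum_pos' (fun w _ => mul_nonneg (hnn x w) (mpow_nonneg hnn n w y)) ?_
      exact ⟨z, Finset.mem_univ z, mul_pos hz ((ih z y).mpr hw)⟩

lemma walkLen_trans (m n : ℕ) (x y z : α) (h1 : walkLen P m x y)
    (h2 : walkLen P n y z) : walkLen P (m + n) x z := by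
  induction m generalizing x with
  | zero => simpa [walkLen] using h1 ▸ h2
  | succ m ih =>
    obtain ⟨w, hw, hwalk⟩ := h1
    rw [show m + 1 + n = (m + n) + 1 by ring]
    exact ⟨w, hw, ih w hwalk⟩

lemma walkLen_mcreach (n : ℕ) (x y : α) (h : walkLen P n x y) : MCReach P x y := by
  induction n generalizing x with
  | zero =>
    have h' : x = y := h
    subst h'
    exact Relation.ReflTransGen.refl
  | succ n ih =>
    obtain ⟨z, hz, hw⟩ := h
    exact Relation.ReflTransGen.head hz (ih z hw)

lemma mcreach_walkLen (x y : α) (h : MCReach P x y) : ∃ n, walkLen P n x y := by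
  induction h with
  | refl => exact ⟨0, rfl⟩
  | tail _ hb ih =>
    obtain ⟨n, hn⟩ := ih
    refine ⟨n + 1, ?_⟩
    have : walkLen P 1 _ _ := ⟨_, hb, rfl⟩
    exact walkLen_trans n 1 _ _ _ hn this

lemma mpow_reach (hnn : ∀ x y, 0 ≤ P x y) {n : ℕ} {x y : α}
    (h : mpow P n x y ≠ 0) : MCReach P x y :=
  walkLen_mcreach n x y ((mpow_pos_iff hnn n x y).mp
    (lt_of_le_of_ne (mpow_nonneg hnn n x y) (Ne.symm h)))

lemma exists_bscc (P : α → α → ℝ) (x : α) :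
    ∃ D : Set α, IsBSCC P D ∧ ∃ y ∈ D, MCReach P x y := by
  classical
  set N : α → ℕ := fun y => (Finset.univ.filter (fun z => MCReach P y z)).card with hN
  have hx : x ∈ Finset.univ.filter (fun z => MCReach P x z) := by
    simp only [Finset.mem_filter, Finset.mem_univ, true_and]
    exact Relation.ReflTransGen.refl
  obtain ⟨y, hy, hymin⟩ := Finset.exists_min_image
    (Finset.univ.filter (fun z => MCReach P x z)) N ⟨x, hx⟩
  have hxy : MCReach P x y := by simpa using hy
  have hmin : ∀ z, MCReach P y z → MCReach P z y := by
    intro z hz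
    have hzx : z ∈ Finset.univ.filter (fun w => MCReach P x w) := by
      simp only [Finset.mem_filter, Finset.mem_univ, true_and]
      exact hxy.trans hz
    have hsub : (Finset.univ.filter (fun w => MCReach P z w)) ⊆
        (Finset.univ.filter (fun w => MCReach P y w)) := by
      intro w hw
      simp only [Finset.mem_filter, Finset.mem_univ, true_and] at hw ⊢
      exact hz.trans hw
    have hcard := hymin z hzx
    have heq := Finset.eq_of_subset_of_card_le hsub (by exact hcard)
    have : y ∈ Finset.univ.filter (fun w => MCReach P y w) := by
      simp only [Finset.mem_filter, Finset.mem_univ, true_and]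
      exact Relation.ReflTransGen.refl
    rw [← heq] at this
    simpa using this
  refine ⟨{z | MCReach P y z}, ⟨⟨y, Relation.ReflTransGen.refl⟩, ?_, ?_⟩, y,
    Relation.ReflTransGen.refl, hxy⟩
  · intro a ha w hw
    exact Relation.ReflTransGen.trans ha hw
  · intro a ha w hw
    exact Relation.ReflTransGen.trans (hmin a ha) hw

lemma bscc_eq_of_mem {P : α → α → ℝ} {D D' : Set α} (hD : IsBSCC P D)
    (hD' : IsBSCC P D') {y : α} (h1 : y ∈ D) (h2 : y ∈ D') : D = D' := by
  apply Set.eq_of_subset_of_subset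
  · intro w hw
    exact hD'.2.1 y h2 w (hD.2.2 y h1 w hw)
  · intro w hw
    exact hD.2.1 y h1 w (hD'.2.2 y h2 w hw)

lemma tendsto_of_split (f : ℕ → ℝ) (L : ℝ) (g h : ℕ → ℝ)
    (hg : Tendsto g atTop (nhds 0)) (hh : Tendsto h atTop (nhds 0))
    (hb : ∀ m n, |f (m + n) - L| ≤ g m + h n) :
    Tendsto f atTop (nhds L) := by
  rw [Metric.tendsto_atTop]
  intro ε hε
  have hg' := Metric.tendsto_atTop.mp hg (ε/2) (by linarith)
  have hh' := Metric.tendsto_atTop.mp hh (ε/2) (by linarith)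
  obtain ⟨m₀, hm₀⟩ := hg'
  obtain ⟨n₀, hn₀⟩ := hh'
  refine ⟨m₀ + n₀, fun k hk => ?_⟩
  have hgm : g m₀ < ε/2 := by
    have := hm₀ m₀ (le_refl _)
    rw [Real.dist_eq, sub_zero] at this
    exact lt_of_le_of_lt (le_abs_self _) this
  have hhn : h (k - m₀) < ε/2 := by
    have := hn₀ (k - m₀) (by omega)
    rw [Real.dist_eq, sub_zero] at this
    exact lt_of_le_of_lt (le_abs_self _) this
  have hk' : m₀ + (k - m₀) = k := by omega
  have := hb m₀ (k - m₀)
  rw [hk'] at this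
  rw [Real.dist_eq]
  linarith

lemma death (hnn : ∀ x y, 0 ≤ P x y) (hrow : ∀ x, ∑ y, P x y ≤ 1) (Sf : Finset α)
    (hblock : ∀ x ∈ Sf, ∀ z, z ∉ Sf → ∀ n, mpow P n x z = 0 ∨
      ∀ y ∈ Sf, ∀ m, mpow P m z y = 0)
    (hleak : ∀ x ∈ Sf, ∃ ℓ, ∑ y ∈ Sf, mpow P ℓ x y < 1) :
    ∀ x ∈ Sf, Tendsto (fun n => ∑ y ∈ Sf, mpow P n x y)
      atTop (nhds 0) := by
  classical
  set u : ℕ → α → ℝ := fun n x => ∑ y ∈ Sf, mpow P n x y with hu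
  have hunn : ∀ n x, 0 ≤ u n x := fun n x =>
    Finset.sum_nonneg fun y _ => mpow_nonneg hnn n x y
  have hule : ∀ n x, u n x ≤ 1 := by
    intro n x
    calc u n x ≤ ∑ y, mpow P n x y := Finset.sum_le_sum_of_subset_of_nonneg
          (Finset.subset_univ _) (fun y _ _ => mpow_nonneg hnn n x y)
    _ ≤ 1 := mpow_row hnn hrow n x
  have hkey : ∀ x ∈ Sf, ∀ n m, u (n + m) x = ∑ z ∈ Sf, mpow P n x z * u m z := by
    intro x hx n m
    have h1 : u (n+m) x = ∑ z, mpow P n x z * u m z := by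
      calc ∑ y ∈ Sf, mpow P (n+m) x y
          = ∑ y ∈ Sf, ∑ z, mpow P n x z * mpow P m z y :=
            Finset.sum_congr rfl fun y _ => mpow_add n m x y
        _ = ∑ z, ∑ y ∈ Sf, mpow P n x z * mpow P m z y := Finset.sum_comm
        _ = ∑ z, mpow P n x z * u m z :=
            Finset.sum_congr rfl fun z _ => (Finset.mul_sum _ _ _).symm
    rw [h1]
    symm
    apply Finset.sum_subset (Finset.subset_univ _)
    intro z _ hz
    rcases hblock x hx z hz n with h | h
    · rw [h, zero_mul]
    · have h0 : u m z = 0 := Finset.sum_eq_zero fun y hy => h y hy m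
      rw [h0, mul_zero]
  have hmono : ∀ x ∈ Sf, ∀ n m, u (n + m) x ≤ u n x := by
    intro x hx n m
    rw [hkey x hx n m]
    calc ∑ z ∈ Sf, mpow P n x z * u m z ≤ ∑ z ∈ Sf, mpow P n x z * 1 :=
      Finset.sum_le_sum fun z _ =>
        mul_le_mul_of_nonneg_left (hule m z) (mpow_nonneg hnn n x z)
    _ = u n x := by simp [hu]
  have hch : ∀ x : α, ∃ ℓ, x ∈ Sf → u ℓ x < 1 := by
    intro x
    by_cases hx : x ∈ Sf
    · obtain ⟨ℓ, hℓ⟩ := hleak x hx; exact ⟨ℓ, fun _ => hℓ⟩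
    · exact ⟨0, fun h => absurd h hx⟩
  choose ℓf hℓf using hch
  set L := Sf.sup ℓf + 1 with hL
  have hL1 : 1 ≤ L := by omega
  have hLle : ∀ x ∈ Sf, u L x < 1 := by
    intro x hx
    have h1 : ℓf x ≤ L := by
      have := Finset.le_sup (f := ℓf) hx; omega
    have h2 : u L x ≤ u (ℓf x) x := by
      have heq : L = ℓf x + (L - ℓf x) := by omega
      rw [heq]; exact hmono x hx _ _
    exact lt_of_le_of_lt h2 (hℓf x hx)
  intro x hx
  rcases Finset.eq_empty_or_nonempty Sf with hemp | hne
  · have hz : (fun n => u n x) = fun _ => (0:ℝ) :=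
      funext fun n => by rw [hu]; simp [hemp]
    show Tendsto (fun n => u n x) atTop (nhds 0)
    rw [hz]; exact tendsto_const_nhds
  · set c := Sf.sup' hne (fun z => u L z) with hc
    have hclt : c < 1 := (Finset.sup'_lt_iff hne).mpr fun z hz => hLle z hz
    have hc0 : 0 ≤ c :=
      le_trans (hunn L hne.choose) (Finset.le_sup' _ hne.choose_spec)
    have hgeo : ∀ k, ∀ z ∈ Sf, u (L * k) z ≤ c ^ k := by
      intro k
      induction k with
      | zero => intro z _; simpa using hule 0 z
      | succ k ih =>
        intro z hz
        have heq : L * (k+1) = L + L * k := by ring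
        rw [heq, hkey z hz L (L * k)]
        calc ∑ w ∈ Sf, mpow P L z w * u (L*k) w
            ≤ ∑ w ∈ Sf, mpow P L z w * c ^ k :=
              Finset.sum_le_sum fun w hw =>
                mul_le_mul_of_nonneg_left (ih w hw)
                  (mpow_nonneg hnn L z w)
          _ = u L z * c ^ k := by rw [← Finset.sum_mul]
          _ ≤ c * c ^ k := by
              have : u L z ≤ c := Finset.le_sup' _ hz
              exact mul_le_mul_of_nonneg_right this (pow_nonneg hc0 k)
          _ = c ^ (k+1) := by ring
    have hant : Antitone (fun n => u n x) := by
      apply antitone_nat_of_succ_le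
      intro n
      exact hmono x hx n 1
    have hbdd : BddBelow (Set.range fun n => u n x) :=
      ⟨0, by rintro r ⟨n, rfl⟩; exact hunn n x⟩
    have hinf := tendsto_atTop_ciInf hant hbdd
    have hsubL : Tendsto (fun k => L * k) atTop atTop := by
      apply tendsto_atTop_mono (f := fun k => k)
      · intro k; exact Nat.le_mul_of_pos_left k (by omega)
      · exact tendsto_id
    have hsub : Tendsto (fun k => u (L * k) x) atTop (nhds (⨅ n, u n x)) :=
      hinf.comp hsubL
    have hzero : Tendsto (fun k => u (L * k) x) atTop (nhds 0) := by
      apply squeeze_zero (fun k => hunn _ x) (fun k => hgeo k x hx)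
      exact tendsto_pow_atTop_nhds_zero_of_lt_one hc0 hclt
    have hinf0 : (⨅ n, u n x) = 0 := tendsto_nhds_unique hsub hzero
    show Tendsto (fun n => u n x) atTop (nhds 0)
    rw [← hinf0]
    exact hinf

lemma doeblin (hnn : ∀ x y, 0 ≤ P x y) {D : Set α} (hD : IsBSCC P D)
    (hap : AperiodicBSCC P D) :
    ∃ N, 1 ≤ N ∧ ∀ x ∈ D, ∀ y ∈ D, 0 < mpow P N x y := by
  obtain ⟨x₀, hx₀⟩ := hD.1
  set S : Set ℕ := {n | 0 < n ∧ walkLen P n x₀ x₀} with hS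
  have hadd : ∀ a ∈ S, ∀ b ∈ S, a + b ∈ S := by
    rintro a ⟨ha, hwa⟩ b ⟨hb, hwb⟩
    exact ⟨by omega, walkLen_trans a b _ _ _ hwa hwb⟩
  have hgcd : ∀ d : ℕ, (∀ n ∈ S, d ∣ n) → d = 1 := by
    intro d hd
    apply hap
    rintro n ⟨hn, x, hx, hw⟩
    obtain ⟨a, hwa⟩ := mcreach_walkLen x₀ x (hD.2.2 x₀ hx₀ x hx)
    obtain ⟨b, hwb⟩ := mcreach_walkLen x x₀ (hD.2.2 x hx x₀ hx₀)
    have hcyc : walkLen P (a + n + b) x₀ x₀ := by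
      have h1 := walkLen_trans a n x₀ x x hwa hw
      have h2 := walkLen_trans (a + n) b x₀ x x₀ h1 hwb
      exact h2
    have h1 : d ∣ a + n + b := hd _ ⟨by omega, hcyc⟩
    rcases Nat.eq_zero_or_pos (a + b) with hab | hab
    · have ha0 : a = 0 := by omega
      have hb0 : b = 0 := by omega
      subst ha0
      have hxx : x₀ = x := hwa
      subst hxx
      exact hd n ⟨hn, hw⟩
    · have h2 : d ∣ a + b := hd _ ⟨hab, walkLen_trans a b x₀ x x₀ hwa hwb⟩
      have h3 := Nat.dvd_sub h1 h2
      have heq : a + n + b - (a + b) = n := by omega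
      rwa [heq] at h3
  obtain ⟨N₀, hN₀⟩ := semigroup_cofinite S hadd hgcd
  have hpair : ∀ p : α × α, ∃ t, p.1 ∈ D → p.2 ∈ D → ∀ n ≥ t, walkLen P n p.1 p.2 := by
    rintro ⟨x, y⟩
    by_cases hx : x ∈ D ∧ y ∈ D
    · obtain ⟨a, hwa⟩ := mcreach_walkLen x x₀ (hD.2.2 x hx.1 x₀ hx₀)
      obtain ⟨b, hwb⟩ := mcreach_walkLen x₀ y (hD.2.2 x₀ hx₀ y hx.2)
      refine ⟨a + b + N₀ + 1, fun _ _ n hn => ?_⟩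
      have hm : n - (a + b) ∈ S := hN₀ _ (by omega)
      have hw2 := walkLen_trans (n - (a+b)) b x₀ x₀ y hm.2 hwb
      have hw3 := walkLen_trans a _ x x₀ y hwa hw2
      have heq : a + (n - (a + b) + b) = n := by omega
      rwa [heq] at hw3
    · exact ⟨0, fun h1 h2 => absurd ⟨h1, h2⟩ hx⟩
  choose t ht using hpair
  set N := Finset.univ.sup t + 1 with hN
  refine ⟨N, by omega, fun x hx y hy => ?_⟩
  rw [mpow_pos_iff hnn]
  apply ht (x, y) hx hy
  have := Finset.le_sup (f := t) (Finset.mem_univ (x,y))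
  omega

theorem mpow_converges (P : α → α → ℝ) (hnn : ∀ x y, 0 ≤ P x y)
    (hrow : ∀ x, ∑ y, P x y ≤ 1)
    (hap : ∀ D : Set α, IsBSCC P D → AperiodicBSCC P D) :
    ∀ x y : α, ∃ L, Tendsto (fun n => mpow P n x y) atTop (nhds L) := by
  classical
  set R : Set α := {z | ∃ D, IsBSCC P D ∧ z ∈ D} with hR
  set T : Set α := Rᶜ with hT
  set Tf := Finset.univ.filter (· ∈ T) with hTf
  have hmemTf : ∀ z, z ∈ Tf ↔ z ∉ R := by
    intro z
    simp only [hTf, Finset.mem_filter, Finset.mem_univ, true_and, hT,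
      Set.mem_compl_iff]
  -- membership of a BSCC is closed under mpow-positivity
  have hclD : ∀ (D : Set α), IsBSCC P D → ∀ z ∈ D, ∀ w, w ∉ D → ∀ n,
      mpow P n z w = 0 := by
    intro D hD z hz w hw n
    by_contra h
    exact hw (hD.2.1 z hz w (mpow_reach hnn h))
  -- death of the transient part
  have deathT : ∀ x ∈ Tf, Tendsto (fun n => ∑ z ∈ Tf, mpow P n x z)
      atTop (nhds 0) := by
    have hblock : ∀ x ∈ Tf, ∀ z, z ∉ Tf → ∀ n, mpow P n x z = 0 ∨
        ∀ y ∈ Tf, ∀ m, mpow P m z y = 0 := by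
      intro x' _ z hz n
      right
      intro w hw m
      have hzR : z ∈ R := Set.not_notMem.mp (fun h => hz ((hmemTf z).mpr h))
      obtain ⟨D, hD, hzD⟩ := hzR
      by_contra h
      have hwD : w ∈ D := hD.2.1 z hzD w (mpow_reach hnn h)
      exact ((hmemTf w).mp hw) ⟨D, hD, hwD⟩
    have hleak : ∀ x ∈ Tf, ∃ ℓ, ∑ y ∈ Tf, mpow P ℓ x y < 1 := by
      intro x' hx'
      obtain ⟨D, hD, y₀, hy₀, hre⟩ := exists_bscc P x'
      obtain ⟨ℓ, hw⟩ := mcreach_walkLen x' y₀ hre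
      refine ⟨ℓ, ?_⟩
      have hpos : 0 < mpow P ℓ x' y₀ := (mpow_pos_iff hnn ℓ x' y₀).mpr hw
      have hy₀T : y₀ ∉ Tf := fun h => ((hmemTf y₀).mp h) ⟨D, hD, hy₀⟩
      have hsub : Tf ⊆ Finset.univ.erase y₀ := by
        intro z hz
        rw [Finset.mem_erase]
        exact ⟨fun h => hy₀T (h ▸ hz), Finset.mem_univ z⟩
      calc ∑ z ∈ Tf, mpow P ℓ x' z
          ≤ ∑ z ∈ Finset.univ.erase y₀, mpow P ℓ x' z :=
            Finset.sum_le_sum_of_subset_of_nonneg hsub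
              (fun z _ _ => mpow_nonneg hnn ℓ x' z)
        _ = (∑ z, mpow P ℓ x' z) - mpow P ℓ x' y₀ :=
            Finset.sum_erase_eq_sub (Finset.mem_univ y₀)
        _ ≤ 1 - mpow P ℓ x' y₀ := by
            have := mpow_row hnn hrow ℓ x'
            linarith
        _ < 1 := by linarith
    exact death hnn hrow Tf hblock hleak
  intro x y
  by_cases hyR : y ∈ R
  · obtain ⟨D, hD, hyD⟩ := hyR
    set Df := Finset.univ.filter (· ∈ D) with hDf
    have hyDf : y ∈ Df := by simp [hDf, hyD]
    have hne : Df.Nonempty := ⟨y, hyDf⟩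
    have hmemDf : ∀ z, z ∈ Df ↔ z ∈ D := fun z => by simp [hDf]
    -- entries from other BSCCs vanish
    have hother : ∀ x', x' ∈ R → x' ∉ D → ∀ n, mpow P n x' y = 0 := by
      intro x' hx'R hx'D n
      obtain ⟨D', hD', hx'⟩ := hx'R
      by_contra h
      have hyD' : y ∈ D' := hD'.2.1 x' hx' y (mpow_reach hnn h)
      exact hx'D ((bscc_eq_of_mem hD' hD hyD' hyD) ▸ hx')
    by_cases hstoch : ∀ z ∈ D, ∑ w, P z w = 1
    · -- stochastic BSCC with Doeblin condition
      have hstD : ∀ z ∈ D, ∑ w ∈ Df, P z w = 1 := by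
        intro z hz
        rw [← hstoch z hz]
        apply Finset.sum_subset (Finset.subset_univ _)
        intro w _ hw
        have hwD : w ∉ D := fun h => hw ((hmemDf w).mpr h)
        have := hclD D hD z hz w hwD 1
        rwa [mpow_one] at this
      have hstn : ∀ n, ∀ z ∈ D, ∑ w ∈ Df, mpow P n z w = 1 := by
        intro n
        induction n with
        | zero =>
          intro z hz
          rw [Finset.sum_eq_single z]
          · simp [mpow_zero]
          · intro w _ hw; rw [mpow_zero]; simp [Ne.symm hw]
          · intro h; exact absurd ((hmemDf z).mpr hz) h
        | succ n ih =>
          intro z hz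
          calc ∑ w ∈ Df, mpow P (n+1) z w
              = ∑ w ∈ Df, ∑ v, mpow P n z v * P v w := rfl
            _ = ∑ v, mpow P n z v * ∑ w ∈ Df, P v w := by
                rw [Finset.sum_comm]
                exact Finset.sum_congr rfl fun v _ => (Finset.mul_sum _ _ _).symm
            _ = ∑ v ∈ Df, mpow P n z v * ∑ w ∈ Df, P v w := by
                symm
                apply Finset.sum_subset (Finset.subset_univ _)
                intro v _ hv
                rw [hclD D hD z hz v (fun h => hv ((hmemDf v).mpr h)) n, zero_mul]
            _ = ∑ v ∈ Df, mpow P n z v := by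
                refine Finset.sum_congr rfl fun v hv => ?_
                rw [hstD v ((hmemDf v).mp hv), mul_one]
            _ = 1 := ih z hz
      obtain ⟨N, hN1, hNpos⟩ := doeblin hnn hD (hap D hD)
      have hprodne : (Df ×ˢ Df).Nonempty := hne.product hne
      set ε := (Df ×ˢ Df).inf' hprodne (fun p => mpow P N p.1 p.2) with hε
      have hεpos : 0 < ε := by
        rw [hε, Finset.lt_inf'_iff]
        rintro ⟨a, b⟩ hab
        rw [Finset.mem_product] at hab
        exact hNpos a ((hmemDf a).mp hab.1) b ((hmemDf b).mp hab.2)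
      have hεle : ∀ z ∈ D, ∀ w ∈ D, ε ≤ mpow P N z w := by
        intro z hz w hw
        exact Finset.inf'_le _
          (show ((z, w) : α × α) ∈ Df ×ˢ Df from Finset.mem_product.mpr
            ⟨(hmemDf z).mpr hz, (hmemDf w).mpr hw⟩)
      set k := (Df.card : ℝ) with hk
      have hεk : ε * k ≤ 1 := by
        have h1 : ∑ w ∈ Df, ε ≤ ∑ w ∈ Df, mpow P N y w :=
          Finset.sum_le_sum fun w hw => hεle y hyD w ((hmemDf w).mp hw)
        rw [hstn N y hyD] at h1
        rw [Finset.sum_const, nsmul_eq_mul] at h1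
        rw [mul_comm] at h1
        exact h1
      set θ := 1 - ε * k with hθ
      have hθ0 : 0 ≤ θ := by rw [hθ]; linarith
      have hθ1 : θ < 1 := by
        rw [hθ]
        have hk1 : (1:ℝ) ≤ k := by
          rw [hk]
          exact_mod_cast Nat.one_le_iff_ne_zero.mpr
            (Finset.card_ne_zero_of_mem hyDf)
        nlinarith
      set M : ℕ → ℝ := fun n => Df.sup' hne (fun z => mpow P n z y) with hM
      set mlow : ℕ → ℝ := fun n => Df.inf' hne (fun z => mpow P n z y) with hml
      have hleM : ∀ n, ∀ z ∈ Df, mpow P n z y ≤ M n := fun n z hz => by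
        simp only [hM]
        exact Finset.le_sup' (f := fun w => mpow P n w y) hz
      have hgem : ∀ n, ∀ z ∈ Df, mlow n ≤ mpow P n z y := fun n z hz => by
        simp only [hml]
        exact Finset.inf'_le (f := fun w => mpow P n w y) hz
      have hmleM : ∀ n, mlow n ≤ M n := fun n =>
        le_trans (hgem n y hyDf) (hleM n y hyDf)
      have hM1 : ∀ n, M n ≤ 1 := fun n => by
        simp only [hM]
        exact Finset.sup'_le hne _ fun z _ => mpow_le_one hnn hrow n z y
      have hm0 : ∀ n, 0 ≤ mlow n := fun n => by
        simp only [hml]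
        exact Finset.le_inf' hne _ fun z _ => mpow_nonneg hnn n z y
      have hiter : ∀ z ∈ D, ∀ s n, mpow P (s+n) z y =
          ∑ w ∈ Df, mpow P s z w * mpow P n w y := by
        intro z hz s n
        rw [mpow_add]
        symm
        apply Finset.sum_subset (Finset.subset_univ _)
        intro w _ hw
        rw [hclD D hD z hz w (fun h => hw ((hmemDf w).mpr h)) s, zero_mul]
      have hMant : ∀ s n, M (s+n) ≤ M n := by
        intro s n
        simp only [hM]
        apply Finset.sup'_le hne
        intro z hz
        rw [hiter z ((hmemDf z).mp hz) s n]
        calc ∑ w ∈ Df, mpow P s z w * mpow P n w y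
            ≤ ∑ w ∈ Df, mpow P s z w * M n := Finset.sum_le_sum fun w hw =>
              mul_le_mul_of_nonneg_left (hleM n w hw) (mpow_nonneg hnn s z w)
          _ = M n := by
              rw [← Finset.sum_mul, hstn s z ((hmemDf z).mp hz), one_mul]
      have hmmon : ∀ s n, mlow n ≤ mlow (s+n) := by
        intro s n
        simp only [hml]
        apply Finset.le_inf' hne
        intro z hz
        rw [hiter z ((hmemDf z).mp hz) s n]
        calc mlow n = ∑ w ∈ Df, mpow P s z w * mlow n := by
              rw [← Finset.sum_mul, hstn s z ((hmemDf z).mp hz), one_mul]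
          _ ≤ ∑ w ∈ Df, mpow P s z w * mpow P n w y := Finset.sum_le_sum fun w hw =>
              mul_le_mul_of_nonneg_left (hgem n w hw) (mpow_nonneg hnn s z w)
      set e : ℕ → ℝ := fun n => M n - mlow n with he
      have hcontr : ∀ n, e (N + n) ≤ θ * e n := by
        intro n
        set Sig := ∑ w ∈ Df, mpow P n w y with hSig
        have hup : ∀ z ∈ D, mpow P (N+n) z y ≤ ε * Sig + θ * M n := by
          intro z hz
          rw [hiter z hz N n]
          have hsplit : ∀ w ∈ Df, mpow P N z w * mpow P n w y =
              ε * mpow P n w y + (mpow P N z w - ε) * mpow P n w y := by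
            intro w _; ring
          rw [Finset.sum_congr rfl hsplit, Finset.sum_add_distrib]
          have h1 : ∑ w ∈ Df, ε * mpow P n w y = ε * Sig := by
            rw [hSig, Finset.mul_sum]
          have h2 : ∑ w ∈ Df, (mpow P N z w - ε) * mpow P n w y ≤ θ * M n := by
            calc ∑ w ∈ Df, (mpow P N z w - ε) * mpow P n w y
                ≤ ∑ w ∈ Df, (mpow P N z w - ε) * M n := Finset.sum_le_sum fun w hw =>
                  mul_le_mul_of_nonneg_left (hleM n w hw)
                    (by linarith [hεle z hz w ((hmemDf w).mp hw)])
              _ = (1 - ε * k) * M n := by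
                  rw [← Finset.sum_mul, Finset.sum_sub_distrib,
                    hstn N z hz, Finset.sum_const, nsmul_eq_mul, hk]
                  ring_nf
              _ = θ * M n := by rw [hθ]
          linarith
        have hdn : ∀ z ∈ D, ε * Sig + θ * mlow n ≤ mpow P (N+n) z y := by
          intro z hz
          rw [hiter z hz N n]
          have hsplit : ∀ w ∈ Df, mpow P N z w * mpow P n w y =
              ε * mpow P n w y + (mpow P N z w - ε) * mpow P n w y := by
            intro w _; ring
          rw [Finset.sum_congr rfl hsplit, Finset.sum_add_distrib]
          have h1 : ∑ w ∈ Df, ε * mpow P n w y = ε * Sig := by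
            rw [hSig, Finset.mul_sum]
          have h2 : θ * mlow n ≤ ∑ w ∈ Df, (mpow P N z w - ε) * mpow P n w y := by
            calc θ * mlow n = (1 - ε * k) * mlow n := by rw [hθ]
              _ = ∑ w ∈ Df, (mpow P N z w - ε) * mlow n := by
                  rw [← Finset.sum_mul, Finset.sum_sub_distrib,
                    hstn N z hz, Finset.sum_const, nsmul_eq_mul, hk]
                  ring_nf
              _ ≤ ∑ w ∈ Df, (mpow P N z w - ε) * mpow P n w y :=
                  Finset.sum_le_sum fun w hw =>
                    mul_le_mul_of_nonneg_left (hgem n w hw)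
                      (by linarith [hεle z hz w ((hmemDf w).mp hw)])
          linarith
        have hMup : M (N+n) ≤ ε * Sig + θ * M n := by
          simp only [hM]
          exact Finset.sup'_le hne _ fun z hz => hup z ((hmemDf z).mp hz)
        have hmdn : ε * Sig + θ * mlow n ≤ mlow (N+n) := by
          simp only [hml]
          exact Finset.le_inf' hne _ fun z hz => hdn z ((hmemDf z).mp hz)
        rw [he]
        simp only
        linarith
      have hennn : ∀ n, 0 ≤ e n := fun n => by
        rw [he]; simp only; linarith [hmleM n]
      have heant : ∀ s n, e (s+n) ≤ e n := fun s n => by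
        rw [he]; simp only; linarith [hMant s n, hmmon s n]
      have he1 : e 0 ≤ 1 := by
        rw [he]; simp only; linarith [hM1 0, hm0 0]
      have hgeo : ∀ j, e (N * j) ≤ θ ^ j := by
        intro j
        induction j with
        | zero => simpa using he1
        | succ j ih =>
          have heq : N * (j+1) = N + N * j := by ring
          rw [heq]
          calc e (N + N * j) ≤ θ * e (N * j) := hcontr (N * j)
            _ ≤ θ * θ ^ j := mul_le_mul_of_nonneg_left ih hθ0
            _ = θ ^ (j+1) := by ring
      have heto : Tendsto e atTop (nhds 0) := by
        have hant : Antitone e := antitone_nat_of_succ_le fun n => by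
          rw [Nat.add_comm n 1]; exact heant 1 n
        have hbdd : BddBelow (Set.range e) := ⟨0, by rintro r ⟨n, rfl⟩; exact hennn n⟩
        have hinf := tendsto_atTop_ciInf hant hbdd
        have hsubN : Tendsto (fun j => N * j) atTop atTop := by
          apply tendsto_atTop_mono (f := fun j => j)
          · intro j; exact Nat.le_mul_of_pos_left j (by omega)
          · exact tendsto_id
        have hsub : Tendsto (fun j => e (N * j)) atTop (nhds (⨅ n, e n)) :=
          hinf.comp hsubN
        have hzero : Tendsto (fun j => e (N * j)) atTop (nhds 0) := by
          apply squeeze_zero (fun j => hennn _) (fun j => hgeo j)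
          exact tendsto_pow_atTop_nhds_zero_of_lt_one hθ0 hθ1
        have : (⨅ n, e n) = 0 := tendsto_nhds_unique hsub hzero
        rwa [this] at hinf
      set π := ⨅ n, M n with hπ
      have hbddM : BddBelow (Set.range M) :=
        ⟨0, by rintro r ⟨n, rfl⟩; exact le_trans (hm0 n) (hmleM n)⟩
      have hπleM : ∀ n, π ≤ M n := fun n => ciInf_le hbddM n
      have hmleπ : ∀ n, mlow n ≤ π := by
        intro n
        apply le_ciInf
        intro j
        rcases le_total n j with h | h
        · calc mlow n ≤ mlow ((j - n) + n) := hmmon _ n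
            _ = mlow j := by rw [Nat.sub_add_cancel h]
            _ ≤ M j := hmleM j
        · calc mlow n ≤ M n := hmleM n
            _ = M ((n - j) + j) := by rw [Nat.sub_add_cancel h]
            _ ≤ M j := hMant _ j
      have hdev : ∀ n, ∀ z ∈ D, |mpow P n z y - π| ≤ e n := by
        intro n z hz
        have h1 : mpow P n z y ≤ M n := hleM n z ((hmemDf z).mpr hz)
        have h2 : mlow n ≤ mpow P n z y := hgem n z ((hmemDf z).mpr hz)
        rw [abs_le]
        constructor
        · rw [he]; simp only; linarith [hπleM n]
        · rw [he]; simp only; linarith [hmleπ n]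
      have hπ0 : 0 ≤ π := le_trans (hm0 0) (hmleπ 0)
      have hπ1 : π ≤ 1 := le_trans (hπleM 0) (hM1 0)
      -- now case on x
      by_cases hxD : x ∈ D
      · refine ⟨π, ?_⟩
        apply tendsto_of_split _ π (fun _ => 0) e tendsto_const_nhds heto
        intro m n
        rw [zero_add]
        calc |mpow P (m+n) x y - π| ≤ e (m+n) := hdev (m+n) x hxD
          _ ≤ e n := heant m n
      · by_cases hxR : x ∈ R
        · refine ⟨0, ?_⟩
          have hz : (fun n => mpow P n x y) = fun _ => (0:ℝ) :=
            funext fun n => hother x hxR hxD n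
          rw [hz]; exact tendsto_const_nhds
        · -- x transient
          have hxT : x ∈ Tf := (hmemTf x).mpr hxR
          set s : ℕ → ℝ := fun m => ∑ z ∈ Df, mpow P m x z with hs
          have hsmono : Monotone s := by
            apply monotone_nat_of_le_succ
            intro m
            calc s m = ∑ z ∈ Df, mpow P m x z := rfl
              _ = ∑ z ∈ Df, mpow P m x z * ∑ w ∈ Df, P z w := by
                  refine Finset.sum_congr rfl fun z hz => ?_
                  rw [hstD z ((hmemDf z).mp hz), mul_one]
              _ ≤ ∑ z, mpow P m x z * ∑ w ∈ Df, P z w := by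
                  apply Finset.sum_le_sum_of_subset_of_nonneg (Finset.subset_univ _)
                  intro z _ _
                  exact mul_nonneg (mpow_nonneg hnn m x z)
                    (Finset.sum_nonneg fun w _ => hnn z w)
              _ = ∑ w ∈ Df, ∑ z, mpow P m x z * P z w := by
                  rw [Finset.sum_comm]
                  exact Finset.sum_congr rfl fun z _ => Finset.mul_sum _ _ _
              _ = s (m+1) := rfl
          have hs1 : ∀ m, s m ≤ 1 := by
            intro m
            calc s m ≤ ∑ z, mpow P m x z := Finset.sum_le_sum_of_subset_of_nonneg
                  (Finset.subset_univ _) (fun z _ _ => mpow_nonneg hnn m x z)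
              _ ≤ 1 := mpow_row hnn hrow m x
          have hbdds : BddAbove (Set.range s) := ⟨1, by rintro r ⟨m, rfl⟩; exact hs1 m⟩
          set habs := ⨆ m, s m with hhabs
          have hsto : Tendsto s atTop (nhds habs) := tendsto_atTop_ciSup hsmono hbdds
          have hsleh : ∀ m, s m ≤ habs := fun m => le_ciSup hbdds m
          refine ⟨π * habs, ?_⟩
          apply tendsto_of_split _ (π * habs)
            (fun m => (∑ z ∈ Tf, mpow P m x z) + (habs - s m)) e ?_ heto
          · intro m n
            have hA : |(∑ z ∈ Df, mpow P m x z * mpow P n z y) - π * s m| ≤ e n := by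
              have h1 : |(∑ z ∈ Df, mpow P m x z * mpow P n z y) - π * s m|
                  = |∑ z ∈ Df, mpow P m x z * (mpow P n z y - π)| := by
                congr 1
                rw [hs, Finset.mul_sum]
                rw [← Finset.sum_sub_distrib]
                refine Finset.sum_congr rfl fun z _ => by ring
              rw [h1]
              calc |∑ z ∈ Df, mpow P m x z * (mpow P n z y - π)|
                  ≤ ∑ z ∈ Df, |mpow P m x z * (mpow P n z y - π)| :=
                    Finset.abs_sum_le_sum_abs _ _
                _ ≤ ∑ z ∈ Df, mpow P m x z * e n := by
                    refine Finset.sum_le_sum fun z hz => ?_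
                    rw [abs_mul, abs_of_nonneg (mpow_nonneg hnn m x z)]
                    exact mul_le_mul_of_nonneg_left
                      (hdev n z ((hmemDf z).mp hz)) (mpow_nonneg hnn m x z)
                _ = s m * e n := by rw [← Finset.sum_mul]
                _ ≤ 1 * e n := mul_le_mul_of_nonneg_right (hs1 m) (hennn n)
                _ = e n := one_mul _
            have hB : (0:ℝ) ≤ ∑ z ∈ Finset.univ \ Df, mpow P m x z * mpow P n z y :=
              Finset.sum_nonneg fun z _ =>
                mul_nonneg (mpow_nonneg hnn m x z) (mpow_nonneg hnn n z y)
            have hBle : ∑ z ∈ Finset.univ \ Df, mpow P m x z * mpow P n z y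
                ≤ (∑ z ∈ Tf, mpow P m x z) := by
              calc ∑ z ∈ Finset.univ \ Df, mpow P m x z * mpow P n z y
                  ≤ ∑ z ∈ Finset.univ \ Df,
                      (if z ∈ T then mpow P m x z else 0) := by
                    refine Finset.sum_le_sum fun z hz => ?_
                    by_cases hzT : z ∈ T
                    · rw [if_pos hzT]
                      calc mpow P m x z * mpow P n z y
                          ≤ mpow P m x z * 1 := mul_le_mul_of_nonneg_left
                            (mpow_le_one hnn hrow n z y) (mpow_nonneg hnn m x z)
                        _ = mpow P m x z := mul_one _
                    · rw [if_neg hzT]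
                      have hzR : z ∈ R := Set.not_notMem.mp hzT
                      have hzD : z ∉ D := by
                        rw [Finset.mem_sdiff] at hz
                        exact fun h => hz.2 ((hmemDf z).mpr h)
                      rw [hother z hzR hzD n, mul_zero]
                _ ≤ ∑ z, (if z ∈ T then mpow P m x z else 0) := by
                    apply Finset.sum_le_sum_of_subset_of_nonneg
                      (Finset.subset_univ _)
                    intro z _ _
                    split
                    · exact mpow_nonneg hnn m x z
                    · exact le_refl 0
                _ = (∑ z ∈ Tf, mpow P m x z) := by
                    rw [hTf, Finset.sum_filter]
            have hsplitsum : mpow P (m+n) x y =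
                (∑ z ∈ Df, mpow P m x z * mpow P n z y) +
                ∑ z ∈ Finset.univ \ Df, mpow P m x z * mpow P n z y := by
              rw [mpow_add, ← Finset.sum_sdiff (Finset.subset_univ Df)]
              exact add_comm _ _
            have hπs : |π * s m - π * habs| ≤ habs - s m := by
              rw [abs_of_nonpos (by nlinarith [hsleh m])]
              nlinarith [hsleh m]
            calc |mpow P (m+n) x y - π * habs|
                = |((∑ z ∈ Df, mpow P m x z * mpow P n z y) - π * s m) +
                    ((∑ z ∈ Finset.univ \ Df, mpow P m x z * mpow P n z y) +
                     (π * s m - π * habs))| := by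
                  rw [hsplitsum]; ring_nf
              _ ≤ |(∑ z ∈ Df, mpow P m x z * mpow P n z y) - π * s m| +
                  |(∑ z ∈ Finset.univ \ Df, mpow P m x z * mpow P n z y) +
                   (π * s m - π * habs)| := abs_add_le _ _
              _ ≤ e n + ((∑ z ∈ Tf, mpow P m x z) + (habs - s m)) := by
                  have h3 : |(∑ z ∈ Finset.univ \ Df, mpow P m x z * mpow P n z y) +
                      (π * s m - π * habs)| ≤ (∑ z ∈ Tf, mpow P m x z) + (habs - s m) := by
                    calc |(∑ z ∈ Finset.univ \ Df, mpow P m x z * mpow P n z y) +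
                        (π * s m - π * habs)|
                        ≤ |∑ z ∈ Finset.univ \ Df, mpow P m x z * mpow P n z y| +
                          |π * s m - π * habs| := abs_add_le _ _
                      _ ≤ (∑ z ∈ Tf, mpow P m x z) + (habs - s m) := by
                          rw [abs_of_nonneg hB]
                          exact add_le_add hBle hπs
                  linarith [hA]
              _ = ((∑ z ∈ Tf, mpow P m x z) + (habs - s m)) + e n := by ring
          · have h1 : Tendsto (fun m => habs - s m) atTop (nhds 0) := by
              have := tendsto_const_nhds (x := habs) (f := atTop (α := ℕ)).sub hsto
              simpa using this
            have := (deathT x hxT).add h1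
            simpa using this
    · -- leaky BSCC: everything dies
      push_neg at hstoch
      obtain ⟨z₀, hz₀D, hz₀⟩ := hstoch
      have hr0 : ∑ w, P z₀ w < 1 := lt_of_le_of_ne (hrow z₀) hz₀
      set r0 := ∑ w, P z₀ w with hr0def
      have deathD : ∀ x' ∈ Df, Tendsto
          (fun n => ∑ w ∈ Df, mpow P n x' w)
          atTop (nhds 0) := by
        apply death hnn hrow Df
        · intro x' hx' z hz n
          exact Or.inl (hclD D hD x' ((hmemDf x').mp hx') z
            (fun h => hz ((hmemDf z).mpr h)) n)
        · intro x' hx'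
          have hx'D : x' ∈ D := (hmemDf x').mp hx'
          obtain ⟨a, hwa⟩ := mcreach_walkLen x' z₀ (hD.2.2 x' hx'D z₀ hz₀D)
          have hpos : 0 < mpow P a x' z₀ := (mpow_pos_iff hnn a x' z₀).mpr hwa
          refine ⟨a + 1, ?_⟩
          have hkey : ∑ w ∈ Df, mpow P (a+1) x' w
              ≤ ∑ z, mpow P a x' z * (if z = z₀ then r0 else 1) := by
            calc ∑ w ∈ Df, mpow P (a+1) x' w
                = ∑ w ∈ Df, ∑ z, mpow P a x' z * P z w := rfl
              _ = ∑ z, mpow P a x' z * ∑ w ∈ Df, P z w := by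
                  rw [Finset.sum_comm]
                  exact Finset.sum_congr rfl fun z _ => (Finset.mul_sum _ _ _).symm
              _ ≤ ∑ z, mpow P a x' z * (if z = z₀ then r0 else 1) := by
                  refine Finset.sum_le_sum fun z _ => ?_
                  apply mul_le_mul_of_nonneg_left _ (mpow_nonneg hnn a x' z)
                  by_cases hzz : z = z₀
                  · rw [if_pos hzz, hzz, hr0def]
                    exact Finset.sum_le_sum_of_subset_of_nonneg
                      (Finset.subset_univ _) (fun w _ _ => hnn z₀ w)
                  · rw [if_neg hzz]
                    calc ∑ w ∈ Df, P z w
                        ≤ ∑ w, P z w := Finset.sum_le_sum_of_subset_of_nonneg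
                          (Finset.subset_univ _) (fun w _ _ => hnn z w)
                      _ ≤ 1 := hrow z
          have hsplit : ∑ z, mpow P a x' z * (if z = z₀ then r0 else 1)
              = (∑ z, mpow P a x' z) + mpow P a x' z₀ * (r0 - 1) := by
            have : ∀ z, mpow P a x' z * (if z = z₀ then r0 else 1)
                = mpow P a x' z + (if z = z₀ then mpow P a x' z * (r0 - 1) else 0) := by
              intro z
              by_cases hzz : z = z₀
              · rw [if_pos hzz, if_pos hzz]; ring
              · rw [if_neg hzz, if_neg hzz]; ring
            rw [Finset.sum_congr rfl fun z _ => this z, Finset.sum_add_distrib,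
              Finset.sum_ite_eq' Finset.univ z₀]
            simp
          have hfinal : (∑ z, mpow P a x' z) + mpow P a x' z₀ * (r0 - 1) < 1 := by
            have h1 := mpow_row hnn hrow a x'
            have h2 : mpow P a x' z₀ * (r0 - 1) < 0 :=
              mul_neg_of_pos_of_neg hpos (by linarith)
            linarith
          linarith [hkey, hsplit ▸ hkey]
      by_cases hxD : x ∈ D
      · refine ⟨0, ?_⟩
        apply squeeze_zero (fun n => mpow_nonneg hnn n x y)
          (fun n => Finset.single_le_sum
            (fun w _ => mpow_nonneg hnn n x w) ((hmemDf y).mpr hyD)) ?_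
        exact deathD x ((hmemDf x).mpr hxD)
      · by_cases hxR : x ∈ R
        · refine ⟨0, ?_⟩
          have hz : (fun n => mpow P n x y) = fun _ => (0:ℝ) :=
            funext fun n => hother x hxR hxD n
          rw [hz]; exact tendsto_const_nhds
        · have hxT : x ∈ Tf := (hmemTf x).mpr hxR
          set F : ℕ → ℝ := fun n => ∑ z ∈ Df, mpow P n z y with hF
          have hFto : Tendsto F atTop (nhds 0) := by
            rw [hF]
            have : (0:ℝ) = ∑ z ∈ Df, (0:ℝ) := by simp
            rw [this]
            apply tendsto_finset_sum
            intro z hz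
            apply squeeze_zero (fun n => mpow_nonneg hnn n z y)
              (fun n => Finset.single_le_sum
                (fun w _ => mpow_nonneg hnn n z w) ((hmemDf y).mpr hyD))
            exact deathD z hz
          refine ⟨0, ?_⟩
          apply tendsto_of_split _ 0 (fun m => ∑ z ∈ Tf, mpow P m x z) F
            (deathT x hxT) hFto
          intro m n
          rw [sub_zero, abs_of_nonneg (mpow_nonneg hnn (m+n) x y)]
          have hsplitsum : mpow P (m+n) x y =
              (∑ z ∈ Df, mpow P m x z * mpow P n z y) +
              ∑ z ∈ Finset.univ \ Df, mpow P m x z * mpow P n z y := by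
            rw [mpow_add, ← Finset.sum_sdiff (Finset.subset_univ Df)]
            ring
          rw [hsplitsum]
          have hA : ∑ z ∈ Df, mpow P m x z * mpow P n z y ≤ F n := by
            rw [hF]
            refine Finset.sum_le_sum fun z _ => ?_
            calc mpow P m x z * mpow P n z y ≤ 1 * mpow P n z y :=
                mul_le_mul_of_nonneg_right (mpow_le_one hnn hrow m x z)
                  (mpow_nonneg hnn n z y)
              _ = mpow P n z y := one_mul _
          have hB : ∑ z ∈ Finset.univ \ Df, mpow P m x z * mpow P n z y
              ≤ (∑ z ∈ Tf, mpow P m x z) := by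
            calc ∑ z ∈ Finset.univ \ Df, mpow P m x z * mpow P n z y
                ≤ ∑ z ∈ Finset.univ \ Df, (if z ∈ T then mpow P m x z else 0) := by
                  refine Finset.sum_le_sum fun z hz => ?_
                  by_cases hzT : z ∈ T
                  · rw [if_pos hzT]
                    calc mpow P m x z * mpow P n z y
                        ≤ mpow P m x z * 1 := mul_le_mul_of_nonneg_left
                          (mpow_le_one hnn hrow n z y) (mpow_nonneg hnn m x z)
                      _ = mpow P m x z := mul_one _
                  · rw [if_neg hzT]
                    have hzR : z ∈ R := Set.not_notMem.mp hzT
                    have hzD : z ∉ D := by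
                      rw [Finset.mem_sdiff] at hz
                      exact fun h => hz.2 ((hmemDf z).mpr h)
                    rw [hother z hzR hzD n, mul_zero]
              _ ≤ ∑ z, (if z ∈ T then mpow P m x z else 0) := by
                  apply Finset.sum_le_sum_of_subset_of_nonneg (Finset.subset_univ _)
                  intro z _ _
                  split
                  · exact mpow_nonneg hnn m x z
                  · exact le_refl 0
              _ = (∑ z ∈ Tf, mpow P m x z) := by
                  rw [hTf, Finset.sum_filter]
          linarith
  · -- y transient
    by_cases hxR : x ∈ R
    · obtain ⟨D, hD, hxD⟩ := hxR
      refine ⟨0, ?_⟩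
      have hz : (fun n => mpow P n x y) = fun _ => (0:ℝ) := by
        funext n
        by_contra h
        exact hyR ⟨D, hD, hD.2.1 x hxD y (mpow_reach hnn h)⟩
      rw [hz]; exact tendsto_const_nhds
    · have hxT : x ∈ Tf := (hmemTf x).mpr hxR
      have hyT : y ∈ Tf := (hmemTf y).mpr hyR
      refine ⟨0, ?_⟩
      apply squeeze_zero (fun n => mpow_nonneg hnn n x y)
        (fun n => Finset.single_le_sum (fun w _ => mpow_nonneg hnn n x w) hyT)
      exact deathT x hxT

end MC


section GBNred
variable {V : Type} [Fintype V] [DecidableEq V]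

lemma ite_sum_zero {β : Type} {c : Prop} [Decidable c] (s : Finset β) (f : β → ℝ) :
    (if c then ∑ d ∈ s, f d else 0) = ∑ d ∈ s, if c then f d else 0 := by
  split <;> simp

lemma ite_mul_zero {c : Prop} [Decidable c] (r x : ℝ) :
    (if c then r * x else 0) = r * (if c then x else 0) := by
  split <;> simp

lemma mem_Pre {E : Finset (V × V)} {x X : V} : x ∈ Pre E X ↔ (x, X) ∈ E := by
  unfold Pre
  constructor
  · intro h
    obtain ⟨⟨a, b⟩, hab, rfl⟩ := Finset.mem_image.mp h
    rw [Finset.mem_filter] at hab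
    have : b = X := hab.2
    subst this
    exact hab.1
  · intro h
    exact Finset.mem_image.mpr ⟨(x, X), Finset.mem_filter.mpr ⟨h, rfl⟩, rfl⟩

lemma copyProb_nonneg (B : GBN V) (X : V) (v : Bool) (b : V → Bool) :
    0 ≤ copyProb B X v b := by
  unfold copyProb
  split
  · exact B.cpt_nonneg X _
  · linarith [B.cpt_le_one X (fun p => b p.1)]

lemma copyProb_sum (B : GBN V) (X : V) (b : V → Bool) :
    copyProb B X true b + copyProb B X false b = 1 := by
  unfold copyProb
  simp

lemma copyProb_sum' (B : GBN V) (X : V) (v : Bool) (b : V → Bool) :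
    copyProb B X v b + copyProb B X (!v) b = 1 := by
  cases v
  · rw [add_comm]; exact copyProb_sum B X b
  · exact copyProb_sum B X b

lemma copyProb_update (B : GBN V) (X x : V) (v w : Bool) (b : V → Bool)
    (hx : (x, X) ∉ B.edges) :
    copyProb B X v (Function.update b x w) = copyProb B X v b := by
  unfold copyProb
  have h : (fun p : {p // p ∈ Pre B.edges X} => Function.update b x w p.1)
      = fun p => b p.1 := by
    funext p
    apply Function.update_of_ne
    intro hpx
    exact hx (mem_Pre.mp (hpx ▸ p.2))
  rw [h]

lemma distDissect_linear (B : GBN V) (C : Finset V) (γ : Asg C → ℝ)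
    (b' : V → Bool) (c : Asg C) :
    distDissect B C γ b' c = ∑ d : Asg C, γ d * distDissect B C (DiracD d) b' c := by
  unfold distDissect DiracD
  rw [Finset.sum_eq_single (fun x : {x // x ∈ C} => b' x.1)]
  · rw [if_pos rfl]; ring
  · intro d _ hd
    rw [if_neg (Ne.symm hd)]
    ring
  · intro h; exact absurd (Finset.mem_univ _) h

lemma Next_linear (B : GBN V) (C : Finset V) (γ : Asg C → ℝ) (a : V → Bool) :
    Next B C γ a = ∑ d : Asg C, γ d * Next B C (DiracD d) a := by
  unfold Next
  calc ∑ b' : V → Bool, (if ∀ x, x ∉ C → b' x = a x then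
          distDissect B C γ b' (fun y => a y.1) else 0)
      = ∑ b' : V → Bool, ∑ d : Asg C, (if ∀ x, x ∉ C → b' x = a x then
          γ d * distDissect B C (DiracD d) b' (fun y => a y.1) else 0) := by
        refine Finset.sum_congr rfl fun b' _ => ?_
        split
        · rw [distDissect_linear]
        · simp
    _ = ∑ d : Asg C, ∑ b' : V → Bool, (if ∀ x, x ∉ C → b' x = a x then
          γ d * distDissect B C (DiracD d) b' (fun y => a y.1) else 0) :=
        Finset.sum_comm
    _ = ∑ d : Asg C, γ d * Next B C (DiracD d) a := by
        refine Finset.sum_congr rfl fun d _ => ?_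
        unfold Next
        rw [Finset.mul_sum]
        refine Finset.sum_congr rfl fun b' _ => ?_
        split <;> ring

lemma marginal_Next_linear (B : GBN V) (C : Finset V) (γ : Asg C → ℝ) (c : Asg C) :
    marginal (Next B C γ) C c = ∑ d : Asg C, γ d * cutsetP B C d c := by
  unfold cutsetP marginal probIf
  simp only [Next_linear B C γ, ite_sum_zero, ite_mul_zero, ← Finset.mul_sum]
  rw [Finset.sum_comm]
  simp only [Finset.mul_sum]
  refine Finset.sum_congr rfl fun y _ => Finset.sum_congr rfl fun x _ => ?_
  congr!

lemma nextSeq_eq (B : GBN V) (C : Finset V) (γ0 : Asg C → ℝ) :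
    ∀ n, nextSeq B C γ0 n = fun c => ∑ d : Asg C, γ0 d * mpow (cutsetP B C) n d c := by
  intro n
  induction n with
  | zero =>
    funext c
    show γ0 c = _
    symm
    calc ∑ d : Asg C, γ0 d * mpow (cutsetP B C) 0 d c
        = ∑ d : Asg C, (if d = c then γ0 d else 0) := by
          refine Finset.sum_congr rfl fun d _ => ?_
          rw [mpow_zero]
          split <;> ring
      _ = γ0 c := by rw [Finset.sum_ite_eq' Finset.univ c γ0, if_pos (Finset.mem_univ c)]
  | succ n ih =>
    funext c
    show marginal (Next B C (nextSeq B C γ0 n)) C c = _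
    rw [marginal_Next_linear, ih]
    calc ∑ d : Asg C, (∑ e : Asg C, γ0 e * mpow (cutsetP B C) n e d) * cutsetP B C d c
        = ∑ d : Asg C, ∑ e : Asg C,
            γ0 e * mpow (cutsetP B C) n e d * cutsetP B C d c := by
          refine Finset.sum_congr rfl fun d _ => ?_
          rw [Finset.sum_mul]
      _ = ∑ e : Asg C, ∑ d : Asg C,
            γ0 e * mpow (cutsetP B C) n e d * cutsetP B C d c := Finset.sum_comm
      _ = ∑ e : Asg C, γ0 e * mpow (cutsetP B C) (n+1) e c := by
          refine Finset.sum_congr rfl fun e _ => ?_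
          rw [mpow_succ, Finset.mul_sum]
          refine Finset.sum_congr rfl fun d _ => by ring

lemma distDissect_nonneg (B : GBN V) (C : Finset V) (γ : Asg C → ℝ)
    (hγ : ∀ d, 0 ≤ γ d) (b' : V → Bool) (c : Asg C) :
    0 ≤ distDissect B C γ b' c := by
  unfold distDissect
  apply mul_nonneg
  apply mul_nonneg
  apply mul_nonneg
  · exact B.ι_dist.1 _
  · exact hγ _
  · exact Finset.prod_nonneg fun X _ => copyProb_nonneg B X _ b'
  · exact Finset.prod_nonneg fun Y _ => copyProb_nonneg B Y.1 _ b'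

lemma DiracD_nonneg {β : Type} [DecidableEq β] (b d : β) : 0 ≤ DiracD b d := by
  unfold DiracD
  split <;> norm_num

lemma cutsetP_nonneg (B : GBN V) (C : Finset V) (d c : Asg C) :
    0 ≤ cutsetP B C d c := by
  unfold cutsetP marginal probIf
  apply Finset.sum_nonneg
  intro a _
  split
  · unfold Next
    apply Finset.sum_nonneg
    intro b' _
    split
    · exact distDissect_nonneg B C _ (fun e => DiracD_nonneg d e) b' _
    · exact le_refl 0
  · exact le_refl 0

lemma sum_marginal (μ : (V → Bool) → ℝ) (C : Finset V) :
    ∑ c : Asg C, marginal μ C c = ∑ a : V → Bool, μ a := by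
  unfold marginal probIf
  rw [Finset.sum_comm]
  refine Finset.sum_congr rfl fun a _ => ?_
  rw [Finset.sum_eq_single (fun x : {x // x ∈ C} => a x.1)]
  · rw [if_pos (fun x => rfl)]
  · intro c _ hc
    apply if_neg
    intro hagr
    exact hc (by funext x; exact (hagr x).symm)
  · intro h; exact absurd (Finset.mem_univ _) h

lemma sum_split_asg (C : Finset V) (b' : V → Bool) (f : Asg C → ℝ) :
    (∑ a : V → Bool, if ∀ x, x ∉ C → b' x = a x then f (fun y => a y.1) else 0)
      = ∑ c : Asg C, f c := by
  classical
  have step1 : ∀ a : V → Bool,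
      (if ∀ x, x ∉ C → b' x = a x then f (fun y => a y.1) else 0)
        = ∑ c : Asg C, if ((fun y : {x // x ∈ C} => a y.1) = c ∧
            ∀ x, x ∉ C → b' x = a x) then f c else 0 := by
    intro a
    by_cases h : ∀ x, x ∉ C → b' x = a x
    · rw [if_pos h]
      simp only [eq_true h, and_true]
      rw [Finset.sum_ite_eq]
      exact (if_pos (Finset.mem_univ _)).symm
    · rw [if_neg h]
      symm
      apply Finset.sum_eq_zero
      intro c _
      rw [if_neg (fun hc => h hc.2)]
  rw [Finset.sum_congr rfl fun a _ => step1 a, Finset.sum_comm]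
  refine Finset.sum_congr rfl fun c _ => ?_
  set a₀ : V → Bool := fun x => if h : x ∈ C then c ⟨x, h⟩ else b' x with ha₀
  have h0 : ∀ a ∈ Finset.univ, a ≠ a₀ →
      (if ((fun y : {x // x ∈ C} => a y.1) = c ∧ ∀ x, x ∉ C → b' x = a x)
        then f c else 0) = 0 := by
    intro a _ hne
    apply if_neg
    rintro ⟨h1, h2⟩
    apply hne
    funext x
    by_cases hx : x ∈ C
    · have := congrFun h1 ⟨x, hx⟩
      rw [ha₀]
      simp only
      rw [dif_pos hx]
      exact this
    · rw [ha₀]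
      simp only
      rw [dif_neg hx]
      exact (h2 x hx).symm
  rw [Finset.sum_eq_single a₀ h0 (fun h => absurd (Finset.mem_univ _) h)]
  rw [if_pos]
  constructor
  · funext y
    rw [ha₀]
    simp only
    rw [dif_pos y.2]
  · intro x hx
    rw [ha₀]
    simp only
    rw [dif_neg hx]

lemma sum_distDissect_c (B : GBN V) (C : Finset V) (γ : Asg C → ℝ) (b' : V → Bool) :
    ∑ c : Asg C, distDissect B C γ b' c =
      B.ι (fun x => b' x.1) * γ (fun x => b' x.1) *
        ∏ X ∈ (Finset.univ \ InitSet B.edges) \ C, copyProb B X (b' X) b' := by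
  unfold distDissect
  have h1 : ∑ c : Asg C, ∏ Y ∈ C.attach, copyProb B Y.1 (c Y) b' = 1 := by
    have h2 : ∀ Y : {x // x ∈ C}, ∑ v : Bool, copyProb B Y.1 v b' = 1 := by
      intro Y
      rw [Fintype.sum_bool]
      exact copyProb_sum B Y.1 b'
    calc ∑ c : Asg C, ∏ Y ∈ C.attach, copyProb B Y.1 (c Y) b'
        = ∑ c : Asg C, ∏ Y : {x // x ∈ C}, copyProb B Y.1 (c Y) b' := by
          refine Finset.sum_congr rfl fun c _ => ?_
          rw [← Finset.univ_eq_attach]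
      _ = ∑ c ∈ Fintype.piFinset (fun _ : {x // x ∈ C} => (Finset.univ : Finset Bool)),
            ∏ Y : {x // x ∈ C}, copyProb B Y.1 (c Y) b' := by
          rw [Fintype.piFinset_univ]
      _ = ∏ Y : {x // x ∈ C}, ∑ v : Bool, copyProb B Y.1 v b' :=
          (Finset.prod_univ_sum (fun _ : {x // x ∈ C} => (Finset.univ : Finset Bool))
            (fun Y v => copyProb B Y.1 v b')).symm
      _ = 1 := by
          rw [Finset.prod_congr rfl fun Y _ => h2 Y, Finset.prod_const_one]
  rw [← Finset.mul_sum, h1, mul_one]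

lemma rowsum_eq (B : GBN V) (C : Finset V) (b : Asg C) :
    ∑ c : Asg C, cutsetP B C b c =
      ∑ b' : V → Bool, B.ι (fun x => b' x.1) * DiracD b (fun x => b' x.1) *
        ∏ X ∈ (Finset.univ \ InitSet B.edges) \ C, copyProb B X (b' X) b' := by
  unfold cutsetP
  rw [sum_marginal]
  unfold Next
  rw [Finset.sum_comm]
  refine Finset.sum_congr rfl fun b' _ => ?_
  rw [sum_split_asg C b' (fun c => distDissect B C (DiracD b) b' c)]
  exact sum_distDissect_c B C (DiracD b) b'

lemma sum_pairing (X : V) (v₀ : Bool) (f : (V → Bool) → ℝ) :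
    ∑ b' : V → Bool, f b' =
      ∑ b' : V → Bool, (if b' X = v₀ then f b' + f (Function.update b' X (!v₀)) else 0) := by
  classical
  rw [← Finset.sum_filter_add_sum_filter_not Finset.univ (fun b' => b' X = v₀) f]
  have h2 : ∑ b' ∈ Finset.univ.filter (fun b' => ¬ b' X = v₀), f b'
      = ∑ b' ∈ Finset.univ.filter (fun b' => b' X = v₀),
          f (Function.update b' X (!v₀)) := by
    apply Finset.sum_nbij' (i := fun b' => Function.update b' X v₀)
      (j := fun b' => Function.update b' X (!v₀))
    · intro a ha
      simp only [Finset.mem_filter, Finset.mem_univ, true_and] at ha ⊢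
      exact Function.update_self X v₀ a
    · intro a ha
      simp only [Finset.mem_filter, Finset.mem_univ, true_and] at ha ⊢
      rw [Function.update_self]
      cases v₀ <;> simp
    · intro a ha
      simp only [Finset.mem_filter, Finset.mem_univ, true_and] at ha
      funext x
      by_cases hx : x = X
      · subst hx
        rw [Function.update_self]
        cases v₀ <;> cases hax : a x <;> simp_all
      · rw [Function.update_of_ne hx, Function.update_of_ne hx]
    · intro a ha
      simp only [Finset.mem_filter, Finset.mem_univ, true_and] at ha
      funext x
      by_cases hx : x = X
      · subst hx
        rw [Function.update_self, ha]
      · rw [Function.update_of_ne hx, Function.update_of_ne hx]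
    · intro a ha
      simp only [Finset.mem_filter, Finset.mem_univ, true_and] at ha
      congr 1
      funext x
      by_cases hx : x = X
      · subst hx
        rw [Function.update_self]
        cases v₀ <;> cases hax : a x <;> simp_all
      · rw [Function.update_of_ne hx, Function.update_of_ne hx]
  rw [h2, ← Finset.sum_add_distrib, Finset.sum_filter]

lemma sumout (B : GBN V) (C : Finset V) (hC : IsCutset B.edges C) (b : Asg C)
    (a₀ : V → Bool) :
    ∀ W : Finset V, W ⊆ (Finset.univ \ InitSet B.edges) \ C →
    (∑ b' : V → Bool,
      if ∀ x ∈ ((Finset.univ \ InitSet B.edges) \ C) \ W, b' x = a₀ x then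
        B.ι (fun x => b' x.1) *
          (if (fun x : {x // x ∈ C} => b' x.1) = b then (1:ℝ) else 0) *
          ∏ X ∈ W, copyProb B X (b' X) b'
      else 0) ≤ 1 := by
  intro W
  induction W using Finset.strongInduction with
  | _ W ih =>
  intro hWK
  have hWC : ∀ w ∈ W, w ∉ C := fun w hw => (Finset.mem_sdiff.mp (hWK hw)).2
  have hWI : ∀ w ∈ W, w ∉ InitSet B.edges := fun w hw =>
    (Finset.mem_sdiff.mp (Finset.mem_sdiff.mp (hWK hw)).1).2
  rcases Finset.eq_empty_or_nonempty W with rfl | hWne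
  · -- base case W = ∅
    have hbd : ∀ b' : V → Bool,
        (if ∀ x ∈ ((Finset.univ \ InitSet B.edges) \ C) \ (∅ : Finset V),
            b' x = a₀ x then
          B.ι (fun x => b' x.1) *
            (if (fun x : {x // x ∈ C} => b' x.1) = b then (1:ℝ) else 0) *
            ∏ X ∈ (∅ : Finset V), copyProb B X (b' X) b'
        else 0)
        = (if (∀ x ∈ (Finset.univ \ InitSet B.edges) \ C, b' x = a₀ x) ∧
              (fun x : {x // x ∈ C} => b' x.1) = b
            then B.ι (fun x => b' x.1) else 0) := by
      intro b'
      rw [Finset.sdiff_empty, Finset.prod_empty, mul_one]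
      by_cases h1 : ∀ x ∈ (Finset.univ \ InitSet B.edges) \ C, b' x = a₀ x
      · by_cases h2 : (fun x : {x // x ∈ C} => b' x.1) = b
        · rw [if_pos h1, if_pos h2, if_pos ⟨h1, h2⟩, mul_one]
        · rw [if_pos h1, if_neg h2, if_neg (fun hc => h2 hc.2), mul_zero]
      · rw [if_neg h1, if_neg (fun hc => h1 hc.1)]
    rw [Finset.sum_congr rfl fun b' _ => hbd b', ← Finset.sum_filter]
    have hinj : ∀ b1 ∈ Finset.univ.filter (fun b' : V → Bool =>
          (∀ x ∈ (Finset.univ \ InitSet B.edges) \ C, b' x = a₀ x) ∧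
            (fun x : {x // x ∈ C} => b' x.1) = b),
        ∀ b2 ∈ Finset.univ.filter (fun b' : V → Bool =>
          (∀ x ∈ (Finset.univ \ InitSet B.edges) \ C, b' x = a₀ x) ∧
            (fun x : {x // x ∈ C} => b' x.1) = b),
        (fun x : {x // x ∈ InitSet B.edges} => b1 x.1)
          = (fun x : {x // x ∈ InitSet B.edges} => b2 x.1) → b1 = b2 := by
      intro b1 h1 b2 h2 heq
      rw [Finset.mem_filter] at h1 h2
      funext x
      by_cases hxI : x ∈ InitSet B.edges
      · exact congrFun heq ⟨x, hxI⟩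
      · by_cases hxC : x ∈ C
        · have e1 := congrFun h1.2.2 ⟨x, hxC⟩
          have e2 := congrFun h2.2.2 ⟨x, hxC⟩
          simp only at e1 e2
          rw [e1, e2]
        · have hxK : x ∈ (Finset.univ \ InitSet B.edges) \ C :=
            Finset.mem_sdiff.mpr ⟨Finset.mem_sdiff.mpr ⟨Finset.mem_univ x, hxI⟩, hxC⟩
          rw [h1.2.1 x hxK, h2.2.1 x hxK]
    calc ∑ b' ∈ Finset.univ.filter (fun b' : V → Bool =>
            (∀ x ∈ (Finset.univ \ InitSet B.edges) \ C, b' x = a₀ x) ∧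
              (fun x : {x // x ∈ C} => b' x.1) = b),
          B.ι (fun x => b' x.1)
        = ∑ d ∈ (Finset.univ.filter (fun b' : V → Bool =>
            (∀ x ∈ (Finset.univ \ InitSet B.edges) \ C, b' x = a₀ x) ∧
              (fun x : {x // x ∈ C} => b' x.1) = b)).image
                (fun b' => (fun x : {x // x ∈ InitSet B.edges} => b' x.1)),
            B.ι d := (Finset.sum_image hinj).symm
      _ ≤ ∑ d : Asg (InitSet B.edges), B.ι d :=
          Finset.sum_le_sum_of_subset_of_nonneg (Finset.subset_univ _)
            (fun d _ _ => B.ι_dist.1 d)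
      _ = 1 := B.ι_dist.2
  · -- inductive step: find a sink X of W
    have hsink : ∃ X ∈ W, ∀ Y ∈ W, (X, Y) ∉ B.edges := by
      by_contra hcon
      push_neg at hcon
      have hW' : ∀ X : {x // x ∈ W}, ∃ Y : {x // x ∈ W}, (X.1, Y.1) ∈ B.edges := by
        intro X
        obtain ⟨Y, hY, hE⟩ := hcon X.1 X.2
        exact ⟨⟨Y, hY⟩, hE⟩
      choose g hg using hW'
      have : Nonempty {x // x ∈ W} := ⟨⟨hWne.choose, hWne.choose_spec⟩⟩
      obtain ⟨x₀⟩ := this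
      have hcyc : ∀ (k : ℕ), 0 < k → ∀ z : {x // x ∈ W},
          Relation.TransGen (fun a c => (a, c) ∈ B.edges ∧ a ∉ C ∧ c ∉ C)
            z.1 (g^[k] z).1 := by
        intro k
        induction k with
        | zero => omega
        | succ k ihk =>
          intro _ z
          have hstep : ∀ w : {x // x ∈ W},
              ((w.1, (g w).1) ∈ B.edges ∧ w.1 ∉ C ∧ (g w).1 ∉ C) :=
            fun w => ⟨hg w, hWC w.1 w.2, hWC (g w).1 (g w).2⟩
          rcases Nat.eq_zero_or_pos k with rfl | hk'
          · rw [show (0:ℕ) + 1 = 1 from rfl, Function.iterate_one]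
            exact Relation.TransGen.single (hstep z)
          · have h2 : g^[k+1] z = g (g^[k] z) := Function.iterate_succ_apply' g k z
            rw [h2]
            exact (ihk hk' z).tail (hstep (g^[k] z))
      have key : ∀ i j : ℕ, i < j → g^[i] x₀ = g^[j] x₀ → False := by
        intro i j hij heq
        have h3 : g^[j - i] (g^[i] x₀) = g^[i] x₀ := by
          rw [← Function.iterate_add_apply, Nat.sub_add_cancel hij.le]
          exact heq.symm
        have := hcyc (j - i) (by omega) (g^[i] x₀)
        rw [h3] at this
        exact hC _ this
      obtain ⟨i, j, hne, heq⟩ :=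
        Finite.exists_ne_map_eq_of_infinite (fun i : ℕ => g^[i] x₀)
      rcases lt_or_gt_of_ne hne with h | h
      · exact key i j h heq
      · exact key j i h heq.symm
    obtain ⟨X, hXW, hXsink⟩ := hsink
    have hXK : X ∈ (Finset.univ \ InitSet B.edges) \ C := hWK hXW
    have hXC : X ∉ C := hWC X hXW
    have hXI : X ∉ InitSet B.edges := hWI X hXW
    have hXX : (X, X) ∉ B.edges := fun h =>
      hC X (Relation.TransGen.single ⟨h, hXC, hXC⟩)
    rw [sum_pairing X (a₀ X)]
    have hstep : ∀ b' : V → Bool,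
        (if b' X = a₀ X then
          (if ∀ x ∈ ((Finset.univ \ InitSet B.edges) \ C) \ W, b' x = a₀ x then
            B.ι (fun x => b' x.1) *
              (if (fun x : {x // x ∈ C} => b' x.1) = b then (1:ℝ) else 0) *
              ∏ Y ∈ W, copyProb B Y (b' Y) b'
          else 0) +
          (if ∀ x ∈ ((Finset.univ \ InitSet B.edges) \ C) \ W,
              Function.update b' X (!(a₀ X)) x = a₀ x then
            B.ι (fun x => Function.update b' X (!(a₀ X)) x.1) *
              (if (fun x : {x // x ∈ C} => Function.update b' X (!(a₀ X)) x.1) = b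
                then (1:ℝ) else 0) *
              ∏ Y ∈ W, copyProb B Y (Function.update b' X (!(a₀ X)) Y)
                (Function.update b' X (!(a₀ X)))
          else 0)
        else 0)
        = (if ∀ x ∈ ((Finset.univ \ InitSet B.edges) \ C) \ W.erase X,
              b' x = a₀ x then
            B.ι (fun x => b' x.1) *
              (if (fun x : {x // x ∈ C} => b' x.1) = b then (1:ℝ) else 0) *
              ∏ Y ∈ W.erase X, copyProb B Y (b' Y) b'
          else 0) := by
      intro b'
      have hιeq : (fun x : {x // x ∈ InitSet B.edges} =>
            Function.update b' X (!(a₀ X)) x.1) = fun x => b' x.1 :=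
        funext fun x => Function.update_of_ne
          (fun h : x.1 = X => hXI (by rw [← h]; exact x.2)) _ _
      have hceq : (fun x : {x // x ∈ C} =>
            Function.update b' X (!(a₀ X)) x.1) = fun x => b' x.1 :=
        funext fun x => Function.update_of_ne
          (fun h : x.1 = X => hXC (by rw [← h]; exact x.2)) _ _
      have hpin : (∀ x ∈ ((Finset.univ \ InitSet B.edges) \ C) \ W,
            Function.update b' X (!(a₀ X)) x = a₀ x)
          ↔ (∀ x ∈ ((Finset.univ \ InitSet B.edges) \ C) \ W, b' x = a₀ x) := by
        constructor <;> intro h x hx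
        · have hxX : x ≠ X := fun he => (Finset.mem_sdiff.mp hx).2 (he ▸ hXW)
          rw [← h x hx]
          exact (Function.update_of_ne hxX _ _).symm
        · have hxX : x ≠ X := fun he => (Finset.mem_sdiff.mp hx).2 (he ▸ hXW)
          rw [Function.update_of_ne hxX]
          exact h x hx
      have hprod' : ∏ Y ∈ W, copyProb B Y (Function.update b' X (!(a₀ X)) Y)
            (Function.update b' X (!(a₀ X)))
          = copyProb B X (!(a₀ X)) b' *
              ∏ Y ∈ W.erase X, copyProb B Y (b' Y) b' := by
        rw [← Finset.mul_prod_erase W _ hXW]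
        congr 1
        · rw [Function.update_self]
          exact copyProb_update B X X (!(a₀ X)) (!(a₀ X)) b' hXX
        · refine Finset.prod_congr rfl fun x hx => ?_
          have hxW : x ∈ W := Finset.mem_of_mem_erase hx
          have hxX : x ≠ X := (Finset.mem_erase.mp hx).1
          rw [Function.update_of_ne hxX]
          exact copyProb_update B x X (b' x) (!(a₀ X)) b'
            (fun hE => hXsink x hxW hE)
      by_cases hbX : b' X = a₀ X
      · by_cases hp : ∀ x ∈ ((Finset.univ \ InitSet B.edges) \ C) \ W, b' x = a₀ x
        · have hp2 : ∀ x ∈ ((Finset.univ \ InitSet B.edges) \ C) \ W.erase X,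
              b' x = a₀ x := by
            intro x hx
            rcases Finset.mem_sdiff.mp hx with ⟨hxK, hxe⟩
            by_cases hxX : x = X
            · subst hxX; exact hbX
            · exact hp x (Finset.mem_sdiff.mpr
                ⟨hxK, fun hxw => hxe (Finset.mem_erase.mpr ⟨hxX, hxw⟩)⟩)
          have hprod : ∏ Y ∈ W, copyProb B Y (b' Y) b'
              = copyProb B X (a₀ X) b' * ∏ Y ∈ W.erase X, copyProb B Y (b' Y) b' := by
            rw [← Finset.mul_prod_erase W _ hXW, hbX]
          rw [if_pos hbX, if_pos hp, if_pos (hpin.mpr hp), if_pos hp2,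
            hιeq, hceq, hprod', hprod]
          have hsum := copyProb_sum' B X (a₀ X) b'
          have hgen : ∀ (A p cA cB : ℝ), cA + cB = 1 →
              A * (cA * p) + A * (cB * p) = A * p := by
            intro A p cA cB h
            have : A * (cA * p) + A * (cB * p) = A * p * (cA + cB) := by ring
            rw [this, h, mul_one]
          exact hgen _ _ _ _ hsum
        · have hp2n : ¬ ∀ x ∈ ((Finset.univ \ InitSet B.edges) \ C) \ W.erase X,
              b' x = a₀ x := by
            intro h
            apply hp
            intro x hx
            rcases Finset.mem_sdiff.mp hx with ⟨hxK, hxw⟩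
            exact h x (Finset.mem_sdiff.mpr
              ⟨hxK, fun he => hxw (Finset.mem_of_mem_erase he)⟩)
          rw [if_pos hbX, if_neg hp, if_neg (fun h => hp (hpin.mp h)), if_neg hp2n]
          simp
      · rw [if_neg hbX]
        symm
        apply if_neg
        intro h
        apply hbX
        apply h X
        exact Finset.mem_sdiff.mpr
          ⟨hXK, fun he => (Finset.mem_erase.mp he).1 rfl⟩
    calc ∑ b' : V → Bool, _
        = ∑ b' : V → Bool,
          (if ∀ x ∈ ((Finset.univ \ InitSet B.edges) \ C) \ W.erase X,
              b' x = a₀ x then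
            B.ι (fun x => b' x.1) *
              (if (fun x : {x // x ∈ C} => b' x.1) = b then (1:ℝ) else 0) *
              ∏ Y ∈ W.erase X, copyProb B Y (b' Y) b'
          else 0) := Finset.sum_congr rfl fun b' _ => hstep b'
      _ ≤ 1 := ih (W.erase X) (Finset.erase_ssubset hXW)
          (subset_trans (Finset.erase_subset X W) hWK)

lemma cutsetP_rowsum (B : GBN V) (C : Finset V) (hC : IsCutset B.edges C)
    (b : Asg C) : ∑ c : Asg C, cutsetP B C b c ≤ 1 := by
  rw [rowsum_eq]
  have h := sumout B C hC b (fun _ => true) ((Finset.univ \ InitSet B.edges) \ C)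
    (subset_refl _)
  calc ∑ b' : V → Bool, B.ι (fun x => b' x.1) * DiracD b (fun x => b' x.1) *
        ∏ X ∈ (Finset.univ \ InitSet B.edges) \ C, copyProb B X (b' X) b'
      = ∑ b' : V → Bool,
        (if ∀ x ∈ ((Finset.univ \ InitSet B.edges) \ C) \
            ((Finset.univ \ InitSet B.edges) \ C), b' x = (fun _ => true) x then
          B.ι (fun x => b' x.1) *
            (if (fun x : {x // x ∈ C} => b' x.1) = b then (1:ℝ) else 0) *
            ∏ X ∈ (Finset.univ \ InitSet B.edges) \ C, copyProb B X (b' X) b'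
        else 0) := by
        refine Finset.sum_congr rfl fun b' _ => ?_
        rw [if_pos]
        · unfold DiracD
          rfl
        · intro x hx
          rw [Finset.sdiff_self] at hx
          exact absurd hx (Finset.notMem_empty x)
    _ ≤ 1 := h

end GBNred

/-- If every bottom SCC of the cutset Markov chain `M_{B↑C}` is
aperiodic, then `Lim(B,C,γ0)` is defined for every initial cutset distribution
`γ0`, i.e. the sequence `γ_n` with `γ_{n+1} = Next(B,C,γ_n)|_C` converges. -/
theorem stmt9 {V : Type} [Fintype V] [DecidableEq V]
    (B : GBN V) (C : Finset V) (hC : IsCutset B.edges C)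
    (hap : ∀ D : Set (Asg C), IsBSCC (cutsetP B C) D →
      AperiodicBSCC (cutsetP B C) D) :
    ∀ γ0 : Asg C → ℝ, IsDist γ0 →
      ∃ γ : Asg C → ℝ, Tendsto (nextSeq B C γ0) atTop (nhds γ) := by
  intro γ0 _
  have hnn : ∀ d c : Asg C, 0 ≤ cutsetP B C d c := cutsetP_nonneg B C
  have hrow : ∀ d : Asg C, ∑ c : Asg C, cutsetP B C d c ≤ 1 := cutsetP_rowsum B C hC
  have hconv := mpow_converges (cutsetP B C) hnn hrow hap
  choose L hL using hconv
  refine ⟨fun c => ∑ d : Asg C, γ0 d * L d c, ?_⟩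
  have heq : (fun n => nextSeq B C γ0 n)
      = fun n => fun c => ∑ d : Asg C, γ0 d * mpow (cutsetP B C) n d c :=
    funext (nextSeq_eq B C γ0)
  show Tendsto (fun n => nextSeq B C γ0 n) atTop _
  rw [heq, tendsto_pi_nhds]
  intro c
  have : (0:ℝ) = 0 := rfl
  apply tendsto_finset_sum
  intro d _
  exact (hL d c).const_mul (γ0 d)

end GBNPaper
end
end

section
/- Let B be a smooth generalized Bayesian network and C a cutset of B. Then the underlying graph of the cutset Markov chain M_{B↑C} is a complete digraph, i.e., P(b,c) > 0 for all assignments b, c of C. -/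
open Filter
open scoped Classical

noncomputable section

namespace GBNPaper

variable {V : Type} [Fintype V] [DecidableEq V]

lemma copyProb_pos {V : Type} [Fintype V] [DecidableEq V]
    (B : GBN V) (hs : Smooth B) (X : V) (v : Bool) (b : V → Bool) :
    0 < copyProb B X v b := by
  unfold copyProb
  rcases hs.1 X (fun p => b p.1) with ⟨h0, h1⟩
  cases v <;> simp <;> linarith

lemma diracD_nonneg {α : Type} [DecidableEq α] (b c : α) : 0 ≤ DiracD b c := by
  unfold DiracD; split <;> norm_num

lemma distDissect_nonneg_s11 {V : Type} [Fintype V] [DecidableEq V]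
    (B : GBN V) (hs : Smooth B) (C : Finset V) (b0 : Asg C)
    (b : V → Bool) (c : Asg C) :
    0 ≤ distDissect B C (DiracD b0) b c := by
  unfold distDissect
  have hι := (hs.2 (fun x => b x.1)).1
  refine mul_nonneg (mul_nonneg (mul_nonneg hι.le (diracD_nonneg _ _)) ?_) ?_
  · exact Finset.prod_nonneg fun X _ => (copyProb_pos B hs X _ b).le
  · exact Finset.prod_nonneg fun Y _ => (copyProb_pos B hs Y.1 _ b).le

lemma next_nonneg {V : Type} [Fintype V] [DecidableEq V]
    (B : GBN V) (hs : Smooth B) (C : Finset V) (b0 : Asg C) (a : V → Bool) :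
    0 ≤ Next B C (DiracD b0) a := by
  unfold Next
  refine Finset.sum_nonneg fun b _ => ?_
  split
  · exact distDissect_nonneg_s11 B hs C b0 b _
  · exact le_refl 0

/-- For a smooth GBN `B` and cutset `C`, the underlying graph of
the cutset Markov chain is a complete digraph: `P(b,c) > 0` for all cutset
assignments `b, c`. -/
theorem stmt11 {V : Type} [Fintype V] [DecidableEq V]
    (B : GBN V) (hs : Smooth B) (C : Finset V) (hC : IsCutset B.edges C) :
    ∀ b c : Asg C, 0 < cutsetP B C b c := by
  intro b c
  unfold cutsetP marginal probIf
  set a : V → Bool := fun x => if h : x ∈ C then c ⟨x, h⟩ else false with ha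
  have hagrees : Agrees a C c := by
    intro x; simp [ha, x.2]
  apply Finset.sum_pos'
  · intro i _
    split
    · exact next_nonneg B hs C b i
    · exact le_refl 0
  · refine ⟨a, Finset.mem_univ a, ?_⟩
    rw [if_pos hagrees]
    unfold Next
    set b' : V → Bool := fun x => if h : x ∈ C then b ⟨x, h⟩ else a x with hb'
    apply Finset.sum_pos'
    · intro i _
      split
      · exact distDissect_nonneg_s11 B hs C b i _
      · exact le_refl 0
    · refine ⟨b', Finset.mem_univ b', ?_⟩
      rw [if_pos (by intro x hx; simp [hb', hx])]
      unfold distDissect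
      have hd : DiracD b (fun x : {x // x ∈ C} => b' x.1) = 1 := by
        unfold DiracD
        rw [if_pos]
        funext x; simp [hb', x.2]
      have hc : (fun y : {y // y ∈ C} => a y.1) = c := funext fun y => hagrees y
      rw [hd, hc]
      have hι := (hs.2 (fun x => b' x.1)).1
      refine mul_pos (mul_pos (mul_pos hι (by norm_num)) ?_) ?_
      · exact Finset.prod_pos fun X _ => copyProb_pos B hs X _ b'
      · exact Finset.prod_pos fun Y _ => copyProb_pos B hs Y.1 _ b'

end GBNPaper
end
end
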